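/- arXiv:2307.03767 — 5 statements merged into one kernel-verified Lean document; each statement's English description precedes it below -/
import Mathlib

section
/- Let U be a split-filtered ring whose filtration is exhaustive, and let S, T ⊆ U be additive subgroups which are split-filtered subgroups: writing S_{≤n} := S ∩ U_{≤n} and S'_n := S ∩ U'_n (similarly for T), assume S = ⋃_n S_{≤n}, S_{≤n} = S'_n + S_{≤n−1}, T = ⋃_n T_{≤n}, and T_{≤n} = T'_n + T_{≤n−1} for all n. Let ST denote the additive subgroup of U generated by all products st with s ∈ S, t ∈ T. Then for every n: ST ∩ U_{≤n} = Σ_{p+q=n} S_{≤p}T_{≤q}, the subgroup (ST)'_n := Σ_{p+q=n} S'_pT'_q satisfies ST ∩ U_{≤n} = (ST)'_n + (ST ∩ U_{≤n−1}) and (ST)'_n ∩ (ST ∩ U_{≤n−1}) = 0; in particular ST, with the restricted filtration and the subgroups (ST)'_n, is split-filtered. -/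
/-- A split-filtered ring: a ring `R` with an increasing filtration `F n` satisfying
`F p * F q ⊆ F (p+q)`, together with splitting subgroups `P n ≤ F n` with
`P p * P q ⊆ P (p+q)` such that each `F n` is the internal direct sum of `P n` and
`F (n-1)`. -/
structure SplitFilteredRing (R : Type) [Ring R] where
  F : ℤ → AddSubgroup R
  P : ℤ → AddSubgroup R
  mono : ∀ n : ℤ, F n ≤ F (n + 1)
  P_le_F : ∀ n : ℤ, P n ≤ F n
  sup_eq : ∀ n : ℤ, F n = P n ⊔ F (n - 1)
  inf_eq : ∀ n : ℤ, P n ⊓ F (n - 1) = ⊥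
  mul_mem : ∀ (p q : ℤ) (x y : R), x ∈ F p → y ∈ F q → x * y ∈ F (p + q)
  P_mul_mem : ∀ (p q : ℤ) (x y : R), x ∈ P p → y ∈ P q → x * y ∈ P (p + q)

/-- The additive subgroup generated by all products `a * b` with `a ∈ A`, `b ∈ B`. -/
def mulSub {R : Type} [Ring R] (A B : AddSubgroup R) : AddSubgroup R :=
  AddSubgroup.closure {x | ∃ a ∈ A, ∃ b ∈ B, x = a * b}

namespace ProofAux

variable {R : Type} [Ring R]

lemma mulSub_le {A B C : AddSubgroup R}
    (h : ∀ a ∈ A, ∀ b ∈ B, a * b ∈ C) : mulSub A B ≤ C := by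
  refine (AddSubgroup.closure_le C).2 ?_
  rintro x ⟨a, ha, b, hb, rfl⟩
  exact h a ha b hb

lemma mem_mulSub_of {A B : AddSubgroup R} {a b : R} (ha : a ∈ A) (hb : b ∈ B) :
    a * b ∈ mulSub A B :=
  AddSubgroup.subset_closure ⟨a, ha, b, hb, rfl⟩

lemma mulSub_mono {A A' B B' : AddSubgroup R} (hA : A ≤ A') (hB : B ≤ B') :
    mulSub A B ≤ mulSub A' B' :=
  mulSub_le fun a ha b hb => mem_mulSub_of (hA ha) (hB hb)

variable (U : SplitFilteredRing R)

lemma F_add_nat (n : ℤ) : ∀ k : ℕ, U.F n ≤ U.F (n + k) := by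
  intro k
  induction k with
  | zero => simp
  | succ k ih =>
    refine ih.trans ?_
    have := U.mono (n + k)
    rwa [show ((n + (k : ℕ) + 1 : ℤ)) = n + ((k : ℕ) + 1 : ℕ) by push_cast; ring] at this

lemma F_mono {m n : ℤ} (h : m ≤ n) : U.F m ≤ U.F n := by
  have := F_add_nat U m ((n - m).toNat)
  rwa [show (m + ((n - m).toNat : ℤ)) = n by omega] at this

lemma mem_iSup_of {ι : Sort*} (f : ι → AddSubgroup R) {x : R} (i : ι) (h : x ∈ f i) :
    x ∈ ⨆ j, f j := (le_iSup f i) h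

variable (S T : AddSubgroup R)

/-- `D n = Σ_{p+q=n} S_{≤p} T_{≤q}`. -/
def D (n : ℤ) : AddSubgroup R := ⨆ p : ℤ, mulSub (S ⊓ U.F p) (T ⊓ U.F (n - p))

/-- `D' n = Σ_{p+q=n} S'_p T'_q`. -/
def D' (n : ℤ) : AddSubgroup R := ⨆ p : ℤ, mulSub (S ⊓ U.P p) (T ⊓ U.P (n - p))

lemma D_le_F (n : ℤ) : D U S T n ≤ U.F n := by
  refine iSup_le fun p => mulSub_le fun a ha b hb => ?_
  have := U.mul_mem p (n - p) a b ha.2 hb.2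
  rwa [show p + (n - p) = n by ring] at this

lemma D'_le_P (n : ℤ) : D' U S T n ≤ U.P n := by
  refine iSup_le fun p => mulSub_le fun a ha b hb => ?_
  have := U.P_mul_mem p (n - p) a b ha.2 hb.2
  rwa [show p + (n - p) = n by ring] at this

lemma D_mono {m n : ℤ} (h : m ≤ n) : D U S T m ≤ D U S T n :=
  iSup_mono fun p => mulSub_mono le_rfl
    (inf_le_inf_left T (F_mono U (by omega : m - p ≤ n - p)))

lemma D'_le_D (n : ℤ) : D' U S T n ≤ D U S T n :=
  iSup_mono fun p => mulSub_mono (inf_le_inf_left S (U.P_le_F p))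
    (inf_le_inf_left T (U.P_le_F _))

lemma D_le_mulSub (n : ℤ) : D U S T n ≤ mulSub S T :=
  iSup_le fun _ => mulSub_mono inf_le_left inf_le_left

lemma mulSub_le_iSup_D (hexh : ∀ x : R, ∃ n : ℤ, x ∈ U.F n) :
    mulSub S T ≤ ⨆ m : ℤ, D U S T m := by
  refine (AddSubgroup.closure_le _).2 ?_
  rintro x ⟨a, ha, b, hb, rfl⟩
  obtain ⟨p, hp⟩ := hexh a
  obtain ⟨q, hq⟩ := hexh b
  have h1 : a * b ∈ mulSub (S ⊓ U.F p) (T ⊓ U.F (p + q - p)) :=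
    mem_mulSub_of ⟨ha, hp⟩ ⟨hb, by rwa [show p + q - p = q by ring]⟩
  have h2 : a * b ∈ D U S T (p + q) :=
    mem_iSup_of (fun r => mulSub (S ⊓ U.F r) (T ⊓ U.F (p + q - r))) p h1
  exact mem_iSup_of (fun m => D U S T m) (p + q) h2

lemma split_D
    (hS_split : ∀ n : ℤ, S ⊓ U.F n = (S ⊓ U.P n) ⊔ (S ⊓ U.F (n - 1)))
    (hT_split : ∀ n : ℤ, T ⊓ U.F n = (T ⊓ U.P n) ⊔ (T ⊓ U.F (n - 1)))
    (m : ℤ) : D U S T m = D' U S T m ⊔ D U S T (m - 1) := by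
  apply le_antisymm
  · refine iSup_le fun p => mulSub_le fun a ha b hb => ?_
    rw [hS_split p] at ha
    rw [hT_split (m - p)] at hb
    obtain ⟨a1, ha1, a0, ha0, rfl⟩ := AddSubgroup.mem_sup.1 ha
    obtain ⟨b1, hb1, b0, hb0, rfl⟩ := AddSubgroup.mem_sup.1 hb
    have expand : (a1 + a0) * (b1 + b0) = a1 * b1 + (a1 * b0 + (a0 * b1 + a0 * b0)) := by
      rw [add_mul, mul_add, mul_add]; abel
    rw [expand]
    have t1 : a1 * b1 ∈ D' U S T m :=
      mem_iSup_of (fun p => mulSub (S ⊓ U.P p) (T ⊓ U.P (m - p))) p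
        (mem_mulSub_of ha1 hb1)
    have t2 : a1 * b0 ∈ D U S T (m - 1) := by
      refine mem_iSup_of (fun p => mulSub (S ⊓ U.F p) (T ⊓ U.F (m - 1 - p))) p ?_
      refine mem_mulSub_of ⟨ha1.1, U.P_le_F p ha1.2⟩ ⟨hb0.1, ?_⟩
      have : (m - p - 1 : ℤ) = m - 1 - p := by ring
      rw [← this]; exact hb0.2
    have t3 : a0 * b1 ∈ D U S T (m - 1) := by
      refine mem_iSup_of (fun p => mulSub (S ⊓ U.F p) (T ⊓ U.F (m - 1 - p))) (p - 1) ?_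
      refine mem_mulSub_of ha0 ⟨hb1.1, ?_⟩
      have : (m - 1 - (p - 1) : ℤ) = m - p := by ring
      rw [this]; exact U.P_le_F _ hb1.2
    have t4 : a0 * b0 ∈ D U S T (m - 1) := by
      refine mem_iSup_of (fun p => mulSub (S ⊓ U.F p) (T ⊓ U.F (m - 1 - p))) (p - 1) ?_
      refine mem_mulSub_of ha0 ⟨hb0.1, ?_⟩
      exact F_mono U (by omega : m - p - 1 ≤ m - 1 - (p - 1)) hb0.2
    exact add_mem ((le_sup_left : D' U S T m ≤ _) t1)
      (add_mem ((le_sup_right : D U S T (m - 1) ≤ _) t2)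
        (add_mem ((le_sup_right : D U S T (m - 1) ≤ _) t3)
          ((le_sup_right : D U S T (m - 1) ≤ _) t4)))
  · exact sup_le (D'_le_D U S T m) (D_mono U S T (by omega))

lemma descent
    (hS_split : ∀ n : ℤ, S ⊓ U.F n = (S ⊓ U.P n) ⊔ (S ⊓ U.F (n - 1)))
    (hT_split : ∀ n : ℤ, T ⊓ U.F n = (T ⊓ U.P n) ⊔ (T ⊓ U.F (n - 1))) :
    ∀ (k : ℕ) (n : ℤ), D U S T (n + k) ⊓ U.F n ≤ D U S T n := by
  intro k
  induction k with
  | zero => intro n; simp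
  | succ k ih =>
    intro n x hx
    obtain ⟨hxD, hxF⟩ := hx
    rw [show (n + ((k : ℕ) + 1 : ℕ) : ℤ) = (n + k) + 1 by push_cast; ring] at hxD
    rw [split_D U S T hS_split hT_split (n + k + 1),
        show (n + (k : ℤ) + 1 - 1) = n + k by ring] at hxD
    obtain ⟨a, haD', b, hbD, rfl⟩ := AddSubgroup.mem_sup.1 hxD
    have hbF : b ∈ U.F (n + k) := D_le_F U S T (n + k) hbD
    have haF : a ∈ U.F (n + k) := by
      have hx' : a + b ∈ U.F (n + k) := F_mono U (by omega) hxF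
      have : a = (a + b) - b := by abel
      rw [this]; exact sub_mem hx' hbF
    have haP : a ∈ U.P (n + k + 1) := D'_le_P U S T _ haD'
    have ha0 : a = 0 := by
      have : a ∈ U.P (n + k + 1) ⊓ U.F (n + k + 1 - 1) :=
        ⟨haP, by rw [show (n + (k : ℤ) + 1 - 1) = n + k by ring]; exact haF⟩
      rw [U.inf_eq (n + k + 1)] at this
      exact this
    subst ha0
    rw [zero_add] at hxF ⊢
    exact ih n ⟨hbD, hxF⟩

end ProofAux

open ProofAux in
/-- for split-filtered additive subgroups `S`, `T` of a split-filtered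
ring `U` with exhaustive filtration, the product subgroup `ST` is split-filtered:
`ST ∩ U_{≤n} = Σ_{p+q=n} S_{≤p}T_{≤q}`, and with `(ST)'_n := Σ_{p+q=n} S'_p T'_q`,
`ST ∩ U_{≤n}` is the internal direct sum of `(ST)'_n` and `ST ∩ U_{≤n-1}`. -/
theorem product_subgroup_split_filtered {R : Type} [Ring R] (U : SplitFilteredRing R)
    (hexh : ∀ x : R, ∃ n : ℤ, x ∈ U.F n)
    (S T : AddSubgroup R)
    (hS_split : ∀ n : ℤ, S ⊓ U.F n = (S ⊓ U.P n) ⊔ (S ⊓ U.F (n - 1)))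
    (hT_split : ∀ n : ℤ, T ⊓ U.F n = (T ⊓ U.P n) ⊔ (T ⊓ U.F (n - 1))) :
    ∀ n : ℤ,
      mulSub S T ⊓ U.F n = (⨆ p : ℤ, mulSub (S ⊓ U.F p) (T ⊓ U.F (n - p))) ∧
      (⨆ p : ℤ, mulSub (S ⊓ U.P p) (T ⊓ U.P (n - p))) ≤ mulSub S T ⊓ U.F n ∧
      mulSub S T ⊓ U.F n =
        (⨆ p : ℤ, mulSub (S ⊓ U.P p) (T ⊓ U.P (n - p))) ⊔ (mulSub S T ⊓ U.F (n - 1)) ∧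
      (⨆ p : ℤ, mulSub (S ⊓ U.P p) (T ⊓ U.P (n - p))) ⊓ (mulSub S T ⊓ U.F (n - 1)) = ⊥ := by
  have key : ∀ n : ℤ, mulSub S T ⊓ U.F n = D U S T n := by
    intro n
    apply le_antisymm
    · rintro x ⟨hx1, hx2⟩
      have hmono : Monotone (fun m : ℤ => D U S T m) := fun _ _ h => D_mono U S T h
      have hdir : Directed (· ≤ ·) (fun m : ℤ => D U S T m) := hmono.directed_le
      obtain ⟨m, hm⟩ := (AddSubgroup.mem_iSup_of_directed hdir).1
        (mulSub_le_iSup_D U S T hexh hx1)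
      have hm' : x ∈ D U S T (n + ((max m n - n).toNat : ℤ)) :=
        D_mono U S T (by omega) hm
      exact descent U S T hS_split hT_split _ n ⟨hm', hx2⟩
    · exact le_inf (D_le_mulSub U S T n) (D_le_F U S T n)
  intro n
  have h1 : mulSub S T ⊓ U.F n = (⨆ p : ℤ, mulSub (S ⊓ U.F p) (T ⊓ U.F (n - p))) := key n
  refine ⟨h1, ?_, ?_, ?_⟩
  · show D' U S T n ≤ mulSub S T ⊓ U.F n
    rw [key n]
    exact D'_le_D U S T n
  · show mulSub S T ⊓ U.F n = D' U S T n ⊔ (mulSub S T ⊓ U.F (n - 1))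
    rw [key n, key (n - 1)]
    exact split_D U S T hS_split hT_split n
  · refine (eq_bot_iff).2 ?_
    rintro x ⟨hx1, hx2⟩
    have : x ∈ U.P n ⊓ U.F (n - 1) :=
      ⟨D'_le_P U S T n hx1, hx2.2⟩
    rw [U.inf_eq n] at this
    exact this
end

section
/- Let U be a split-filtered associative unital ring with exhaustive filtration, and let X ⊆ U be an additive subgroup which is a split-filtered subgroup: writing X_{≤n} := X ∩ U_{≤n} and X'_n := X ∩ U'_n, assume X = ⋃_n X_{≤n} and X_{≤n} = X'_n + X_{≤n−1} for all n. Let I := UXU be the two-sided ideal of U generated by X, and let I' be the two-sided ideal of the graded subring U' generated by X' := Σ_n X'_n. Then I is split-filtered with the restricted filtration I ∩ U_{≤n} and with splitting subgroups I'_n := I' ∩ U'_n: for every n, I ∩ U_{≤n} is the internal direct sum of I'_n and I ∩ U_{≤n−1}. -/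
/-- The two-sided ideal `I = U X U` of the (unital) ring `U` generated by a subset
carried by the additive subgroup `X`. -/
def idealGen {R : Type} [Ring R] (X : AddSubgroup R) : AddSubgroup R :=
  AddSubgroup.closure {y | ∃ u v : R, ∃ x ∈ X, y = u * x * v}

/-- The two-sided ideal of the (possibly nonunital) graded subring `U'` generated by
a subset carried by the additive subgroup `X'` (with `U'` given by an additive
subgroup which is closed under multiplication). -/
def idealGenIn {R : Type} [Ring R] (U' X' : AddSubgroup R) : AddSubgroup R :=
  AddSubgroup.closure
    ({y | y ∈ X'} ∪ {y | ∃ u ∈ U', ∃ x ∈ X', y = u * x} ∪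
      {y | ∃ x ∈ X', ∃ v ∈ U', y = x * v} ∪
      {y | ∃ u ∈ U', ∃ x ∈ X', ∃ v ∈ U', y = u * x * v})

namespace SplitFilteredRing
variable {R : Type} [Ring R] (U : SplitFilteredRing R)

lemma F_mono ⦃m n : ℤ⦄ (h : m ≤ n) : U.F m ≤ U.F n :=
  Int.le_induction (motive := fun n _ => U.F m ≤ U.F n) le_rfl (fun k _ ih => ih.trans (U.mono k)) n h

lemma decomp (c : ℤ) : ∀ p : ℤ, U.F p ≤ (⨆ m, U.P m) ⊔ U.F c := by
  have key : ∀ k : ℤ, c ≤ k → U.F k ≤ (⨆ m, U.P m) ⊔ U.F c := by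
    refine fun k hk => Int.le_induction (motive := fun k _ => U.F k ≤ (⨆ m, U.P m) ⊔ U.F c) le_sup_right ?_ k hk
    intro k hk ih
    rw [U.sup_eq (k + 1), show k + 1 - 1 = k by ring]
    exact sup_le ((le_iSup U.P (k+1)).trans le_sup_left) ih
  intro p
  rcases le_or_gt p c with h | h
  · exact (U.F_mono h).trans le_sup_right
  · exact key p h.le

lemma decompX (X : AddSubgroup R)
    (hX : ∀ n : ℤ, X ⊓ U.F n = (X ⊓ U.P n) ⊔ (X ⊓ U.F (n - 1))) (c : ℤ) :
    ∀ p : ℤ, X ⊓ U.F p ≤ (⨆ m, X ⊓ U.P m) ⊔ (X ⊓ U.F c) := by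
  have key : ∀ k : ℤ, c ≤ k → X ⊓ U.F k ≤ (⨆ m, X ⊓ U.P m) ⊔ (X ⊓ U.F c) := by
    refine fun k hk => Int.le_induction (motive := fun k _ => X ⊓ U.F k ≤ (⨆ m, X ⊓ U.P m) ⊔ (X ⊓ U.F c)) le_sup_right ?_ k hk
    intro k hk ih
    rw [hX (k + 1), show k + 1 - 1 = k by ring]
    exact sup_le ((le_iSup (fun m => X ⊓ U.P m) (k+1)).trans le_sup_left) ih
  intro p
  rcases le_or_gt p c with h | h
  · exact (inf_le_inf_left X (U.F_mono h)).trans le_sup_right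
  · exact key p h.le

lemma vanish (n : ℤ) : ∀ s : Finset ℤ, ∀ f : ℤ → R, (∀ m ∈ s, f m ∈ U.P m) →
    (∑ m ∈ s, f m) ∈ U.F n → ∀ m ∈ s, n < m → f m = 0 := by
  intro s
  induction s using Finset.strongInduction with
  | _ s ih =>
    intro f hf hsum m hm hnm
    have hne : s.Nonempty := ⟨m, hm⟩
    set M := s.max' hne with hM
    have hMs : M ∈ s := s.max'_mem hne
    have hnM : n < M := lt_of_lt_of_le hnm (s.le_max' m hm)
    have hrest : (∑ k ∈ s.erase M, f k) ∈ U.F (M - 1) := by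
      apply AddSubgroup.sum_mem
      intro k hk
      have h1 : k ≤ M := s.le_max' k (Finset.mem_of_mem_erase hk)
      have h2 : k ≠ M := Finset.ne_of_mem_erase hk
      exact U.F_mono (by omega : k ≤ M - 1) (U.P_le_F k (hf k (Finset.mem_of_mem_erase hk)))
    have hfM0 : f M = 0 := by
      have h1 : f M ∈ U.F (M - 1) := by
        have he : f M = (∑ k ∈ s, f k) - (∑ k ∈ s.erase M, f k) := by
          rw [← Finset.add_sum_erase s f hMs, add_sub_cancel_right]
        rw [he]
        exact sub_mem (U.F_mono (by omega : n ≤ M - 1) hsum) hrest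
      have hmem : f M ∈ (U.P M ⊓ U.F (M - 1) : AddSubgroup R) := ⟨hf M hMs, h1⟩
      rw [U.inf_eq M] at hmem
      exact hmem
    by_cases hmM : m = M
    · rw [hmM]; exact hfM0
    · refine ih (s.erase M) (Finset.erase_ssubset hMs) f
        (fun k hk => hf k (Finset.mem_of_mem_erase hk)) ?_ m
        (Finset.mem_erase.mpr ⟨hmM, hm⟩) hnm
      rwa [Finset.sum_erase_eq_sub hMs, hfM0, sub_zero]

/-- The graded pieces of the graded ideal. -/
def K (X : AddSubgroup R) (m : ℤ) : AddSubgroup R :=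
  idealGenIn (⨆ m : ℤ, U.P m) (⨆ m : ℤ, X ⊓ U.P m) ⊓ U.P m

lemma mul3_mem (X : AddSubgroup R) :
    ∀ a ∈ (⨆ m, U.P m), ∀ b ∈ (⨆ m, X ⊓ U.P m), ∀ c ∈ (⨆ m, U.P m),
      a * b * c ∈ ⨆ m, U.K X m := by
  have step1 : ∀ (j k : ℤ) (b : R), b ∈ X ⊓ U.P j → ∀ c ∈ U.P k,
      ∀ a ∈ (⨆ m, U.P m), a * b * c ∈ ⨆ m, U.K X m := by
    intro j k b hb c hc a ha
    have hle : (⨆ m, U.P m) ≤ AddSubgroup.comap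
        ((AddMonoidHom.mulRight c).comp (AddMonoidHom.mulRight b)) (⨆ m, U.K X m) := by
      refine iSup_le fun i => ?_
      intro a ha
      rw [AddSubgroup.mem_comap]
      refine le_iSup (U.K X) (i + j + k) ?_
      refine ⟨?_, U.P_mul_mem (i + j) k _ c (U.P_mul_mem i j a b ha hb.2) hc⟩
      exact AddSubgroup.subset_closure (Or.inr
        ⟨a, le_iSup U.P i ha, b, le_iSup (fun m => X ⊓ U.P m) j hb, c, le_iSup U.P k hc, rfl⟩)
    exact hle ha
  have step2 : ∀ (j : ℤ) (b : R), b ∈ X ⊓ U.P j → ∀ a ∈ (⨆ m, U.P m),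
      ∀ c ∈ (⨆ m, U.P m), a * b * c ∈ ⨆ m, U.K X m := by
    intro j b hb a ha c hc
    have hle : (⨆ m, U.P m) ≤ AddSubgroup.comap
        (AddMonoidHom.mulLeft (a * b)) (⨆ m, U.K X m) := by
      refine iSup_le fun k => ?_
      intro c hc
      rw [AddSubgroup.mem_comap]
      exact step1 j k b hb c hc a ha
    exact hle hc
  intro a ha b hb c hc
  have hle : (⨆ m, X ⊓ U.P m) ≤ AddSubgroup.comap
      ((AddMonoidHom.mulLeft a).comp (AddMonoidHom.mulRight c)) (⨆ m, U.K X m) := by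
    refine iSup_le fun j => ?_
    intro b hb
    rw [AddSubgroup.mem_comap]
    have : a * (b * c) = a * b * c := by rw [mul_assoc]
    simpa [this] using step2 j b hb a ha c hc
  have h := hle hb
  rw [AddSubgroup.mem_comap] at h
  simpa [mul_assoc] using h

/-- any generator-degree element `u*x*v` of `I` with `x ∈ X` and bounded degrees
lies in `I ⊓ F n` provided the total degree is at most `n`. -/
lemma prod_mem_inf (X : AddSubgroup R) {a b c : R} {da db dc n : ℤ}
    (ha : a ∈ U.F da) (hbX : b ∈ X) (hb : b ∈ U.F db) (hc : c ∈ U.F dc)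
    (hn : da + db + dc ≤ n) : a * b * c ∈ idealGen X ⊓ U.F n := by
  constructor
  · exact AddSubgroup.subset_closure ⟨a, c, b, hbX, rfl⟩
  · exact U.F_mono hn (U.mul_mem (da + db) dc _ c (U.mul_mem da db a b ha hb) hc)

lemma gen_decomp (X : AddSubgroup R) (hexh : ∀ x : R, ∃ n : ℤ, x ∈ U.F n)
    (hX : ∀ n : ℤ, X ⊓ U.F n = (X ⊓ U.P n) ⊔ (X ⊓ U.F (n - 1))) (n : ℤ) :
    idealGen X ≤ (⨆ m, U.K X m) ⊔ (idealGen X ⊓ U.F n) := by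
  rw [idealGen, AddSubgroup.closure_le]
  rintro y ⟨u, v, x, hxX, rfl⟩
  obtain ⟨p, hu⟩ := hexh u
  obtain ⟨q, hx⟩ := hexh x
  obtain ⟨r, hv⟩ := hexh v
  set c : ℤ := min p (min q (min r (min (n - p - q) (min (n - p - r) (n - q - r))))) with hcdef
  have hcp : c ≤ p := min_le_left _ _
  have hcq : c ≤ q := by simp [hcdef]
  have hcr : c ≤ r := by simp [hcdef]
  have hc1 : c ≤ n - p - q := by simp [hcdef]
  have hc2 : c ≤ n - p - r := by simp [hcdef]
  have hc3 : c ≤ n - q - r := by simp [hcdef]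
  obtain ⟨u1, hu1, u0, hu0, huu⟩ := (AddSubgroup.mem_sup).1 (U.decomp c p hu)
  obtain ⟨x1, hx1, x0, hx0, hxx⟩ := (AddSubgroup.mem_sup).1 (U.decompX X hX c q ⟨hxX, hx⟩)
  obtain ⟨v1, hv1, v0, hv0, hvv⟩ := (AddSubgroup.mem_sup).1 (U.decomp c r hv)
  -- degree bounds on the homogeneous parts
  have hu1F : u1 ∈ U.F p := by
    have : u1 = u - u0 := by rw [← huu, add_sub_cancel_right]
    rw [this]; exact sub_mem hu (U.F_mono hcp hu0)
  have hx1F : x1 ∈ U.F q := by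
    have : x1 = x - x0 := by rw [← hxx, add_sub_cancel_right]
    rw [this]; exact sub_mem hx (U.F_mono hcq hx0.2)
  have hx1X : x1 ∈ X := (iSup_le fun m => (inf_le_left : X ⊓ U.P m ≤ X) : (⨆ m, X ⊓ U.P m) ≤ X) hx1
  have hv1F : v1 ∈ U.F r := by
    have : v1 = v - v0 := by rw [← hvv, add_sub_cancel_right]
    rw [this]; exact sub_mem hv (U.F_mono hcr hv0)
  have hexp : u * x * v = u1 * x1 * v1 + (u1 * x1 * v0 + (u1 * x0 * v1 + (u1 * x0 * v0 +
      (u0 * x1 * v1 + (u0 * x1 * v0 + (u0 * x0 * v1 + u0 * x0 * v0)))))) := by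
    rw [← huu, ← hxx, ← hvv]; noncomm_ring
  rw [hexp]
  set G := (⨆ m, U.K X m) ⊔ (idealGen X ⊓ U.F n) with hG
  have hmixed : ∀ (a b c' : R) (da db dc : ℤ), a ∈ U.F da → b ∈ X → b ∈ U.F db →
      c' ∈ U.F dc → da + db + dc ≤ n → a * b * c' ∈ G := by
    intro a b c' da db dc h1 h2 h3 h4 h5
    exact le_sup_right (a := (⨆ m, U.K X m)) (U.prod_mem_inf X h1 h2 h3 h4 h5)
  refine add_mem (le_sup_left (b := idealGen X ⊓ U.F n) (U.mul3_mem X u1 hu1 x1 hx1 v1 hv1))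
    (add_mem ?_ (add_mem ?_ (add_mem ?_ (add_mem ?_ (add_mem ?_ (add_mem ?_ ?_))))))
  · exact hmixed _ _ _ p q c hu1F hx1X hx1F hv0 (by omega)
  · exact hmixed _ _ _ p c r hu1F hx0.1 hx0.2 hv1F (by omega)
  · exact hmixed _ _ _ p c c hu1F hx0.1 hx0.2 hv0 (by omega)
  · exact hmixed _ _ _ c q r hu0 hx1X hx1F hv1F (by omega)
  · exact hmixed _ _ _ c q c hu0 hx1X hx1F hv0 (by omega)
  · exact hmixed _ _ _ c c r hu0 hx0.1 hx0.2 hv1F (by omega)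
  · exact hmixed _ _ _ c c c hu0 hx0.1 hx0.2 hv0 (by omega)

lemma idealGenIn_le (X : AddSubgroup R) :
    idealGenIn (⨆ m : ℤ, U.P m) (⨆ m : ℤ, X ⊓ U.P m) ≤ idealGen X := by
  have hXle : (⨆ m : ℤ, X ⊓ U.P m) ≤ X := iSup_le fun m => inf_le_left
  rw [idealGenIn, AddSubgroup.closure_le]
  rintro y (((hy | ⟨u, hu, x, hx, rfl⟩) | ⟨x, hx, v, hv, rfl⟩) | ⟨u, hu, x, hx, v, hv, rfl⟩)
  · exact AddSubgroup.subset_closure ⟨1, 1, y, hXle hy, by rw [one_mul, mul_one]⟩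
  · exact AddSubgroup.subset_closure ⟨u, 1, x, hXle hx, by rw [mul_one]⟩
  · exact AddSubgroup.subset_closure ⟨1, v, x, hXle hx, by rw [one_mul]⟩
  · exact AddSubgroup.subset_closure ⟨u, v, x, hXle hx, rfl⟩

lemma mem_iSupK (X : AddSubgroup R) {w : R} (hw : w ∈ ⨆ m, U.K X m) :
    ∃ f : ℤ →₀ R, (∀ m, f m ∈ U.K X m) ∧ ∑ m ∈ f.support, f m = w := by
  have key : w ∈ (⨆ m, AddSubgroup.toIntSubmodule (U.K X m) : Submodule ℤ R) := by
    have hle : (⨆ m, U.K X m) ≤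
        ((⨆ m, AddSubgroup.toIntSubmodule (U.K X m)) : Submodule ℤ R).toAddSubgroup := by
      refine iSup_le fun m z hz => ?_
      have := (le_iSup (fun m => AddSubgroup.toIntSubmodule (U.K X m)) m)
        (by exact hz : z ∈ AddSubgroup.toIntSubmodule (U.K X m))
      simpa using this
    simpa using hle hw
  obtain ⟨f, hf, hsum⟩ := (Submodule.mem_iSup_iff_exists_finsupp _ _).1 key
  exact ⟨f, fun m => by exact hf m, hsum⟩

end SplitFilteredRing

/-- if `X` is a split-filtered additive subgroup of a split-filtered
associative unital ring `U` with exhaustive filtration, then the two-sided ideal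
`I = UXU` generated by `X` is split-filtered, with restricted filtration `I ∩ U_{≤n}`
and splitting subgroups `I'ₙ = I' ∩ U'ₙ`, where `I'` is the two-sided ideal of the
graded subring `U' = Σₙ U'ₙ` generated by `X' = Σₙ X'ₙ`. -/
theorem ideal_split_filtered {R : Type} [Ring R] (U : SplitFilteredRing R)
    (hexh : ∀ x : R, ∃ n : ℤ, x ∈ U.F n)
    (X : AddSubgroup R)
    (hX_split : ∀ n : ℤ, X ⊓ U.F n = (X ⊓ U.P n) ⊔ (X ⊓ U.F (n - 1))) :
    ∀ n : ℤ,
      (idealGenIn (⨆ m : ℤ, U.P m) (⨆ m : ℤ, X ⊓ U.P m) ⊓ U.P n) ≤ idealGen X ⊓ U.F n ∧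
      idealGen X ⊓ U.F n =
        (idealGenIn (⨆ m : ℤ, U.P m) (⨆ m : ℤ, X ⊓ U.P m) ⊓ U.P n) ⊔
          (idealGen X ⊓ U.F (n - 1)) ∧
      (idealGenIn (⨆ m : ℤ, U.P m) (⨆ m : ℤ, X ⊓ U.P m) ⊓ U.P n) ⊓
          (idealGen X ⊓ U.F (n - 1)) = ⊥ := by
  intro n
  have hI'leI := U.idealGenIn_le X
  have part1 : (idealGenIn (⨆ m : ℤ, U.P m) (⨆ m : ℤ, X ⊓ U.P m) ⊓ U.P n) ≤
      idealGen X ⊓ U.F n := fun z hz => ⟨hI'leI hz.1, U.P_le_F n hz.2⟩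
  refine ⟨part1, ?_, ?_⟩
  · apply le_antisymm
    · intro z hz
      obtain ⟨hzI, hzF⟩ := hz
      obtain ⟨w, hw, r, hr, hzwr⟩ :=
        (AddSubgroup.mem_sup).1 (U.gen_decomp X hexh hX_split (n - 1) hzI)
      have hwF : w ∈ U.F n := by
        have : w = z - r := by rw [← hzwr, add_sub_cancel_right]
        rw [this]
        exact sub_mem hzF (U.F_mono (by omega : n - 1 ≤ n) hr.2)
      obtain ⟨f, hfK, hfsum⟩ := U.mem_iSupK X hw
      have hsupp : ∀ m ∈ f.support, m ≤ n := by
        intro m hm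
        by_contra hc
        push_neg at hc
        exact (Finsupp.mem_support_iff.1 hm)
          (U.vanish n f.support f (fun k _ => (hfK k).2) (hfsum ▸ hwF) m hm hc)
      have hwsplit : w = f n + ∑ m ∈ f.support.erase n, f m := by
        by_cases hn : n ∈ f.support
        · rw [← hfsum, ← Finset.add_sum_erase f.support f hn]
        · rw [Finset.erase_eq_of_notMem hn, Finsupp.notMem_support_iff.1 hn, zero_add, hfsum]
      have hrest : (∑ m ∈ f.support.erase n, f m) ∈ idealGen X ⊓ U.F (n - 1) := by
        apply AddSubgroup.sum_mem
        intro k hk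
        have hk1 : k ≤ n := hsupp k (Finset.mem_of_mem_erase hk)
        have hk2 : k ≠ n := Finset.ne_of_mem_erase hk
        exact ⟨hI'leI (hfK k).1,
          U.F_mono (by omega : k ≤ n - 1) (U.P_le_F k (hfK k).2)⟩
      refine (AddSubgroup.mem_sup).2 ⟨f n, hfK n, (∑ m ∈ f.support.erase n, f m) + r,
        add_mem hrest hr, ?_⟩
      rw [← add_assoc, ← hwsplit, hzwr]
    · refine sup_le part1 ?_
      exact inf_le_inf_left _ (U.F_mono (by omega : n - 1 ≤ n))
  · rw [eq_bot_iff]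
    intro z hz
    have : z ∈ U.P n ⊓ U.F (n - 1) := ⟨hz.1.2, hz.2.2⟩
    rw [U.inf_eq n] at this
    exact this
end

section
/- Let R be a commutative ring and L a Lie algebra over R with an exhaustive filtration by R-submodules L_{≤n} (n ∈ ℤ) satisfying [L_{≤p}, L_{≤q}] ⊆ L_{≤p+q}, together with R-submodules L'_n ⊆ L_{≤n} such that for every n, L_{≤n} is the internal direct sum of L'_n and L_{≤n−1}, and [L'_p, L'_q] ⊆ L'_{p+q}; thus L' := ⊕_n L'_n is a ℤ-graded Lie subalgebra of L and its universal enveloping algebra U(L') is a ℤ-graded associative R-algebra. Filter U(L) by letting U(L)_{≤n} be the R-submodule spanned by 1 (when n ≥ 0) together with all products ι(x_1)⋯ι(x_k) with x_i ∈ L_{≤n_i} and n_1 + ⋯ + n_k ≤ n, where ι : L → U(L) is the canonical map. Then U(L) is a split-filtered algebra with respect to U(L'): for every n, the canonical algebra map U(L') → U(L) is injective on the homogeneous component U(L')_n, and U(L)_{≤n} is the internal direct sum of the image of U(L')_n and U(L)_{≤n−1}. -/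
/-- A split filtration on a Lie algebra `L` over `R`: an exhaustive increasing
filtration by submodules `F n` with `⁅F p, F q⁆ ⊆ F (p+q)`, together with splitting
submodules `P n ≤ F n` with `⁅P p, P q⁆ ⊆ P (p+q)`, such that each `F n` is the
internal direct sum of `P n` and `F (n-1)`. -/
structure LieSplitFiltration (R L : Type) [CommRing R] [LieRing L] [LieAlgebra R L] where
  F : ℤ → Submodule R L
  P : ℤ → Submodule R L
  mono : ∀ n : ℤ, F n ≤ F (n + 1)
  exh : ∀ x : L, ∃ n : ℤ, x ∈ F n
  P_le_F : ∀ n : ℤ, P n ≤ F n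
  sup_eq : ∀ n : ℤ, F n = P n ⊔ F (n - 1)
  inf_eq : ∀ n : ℤ, P n ⊓ F (n - 1) = ⊥
  lie_F : ∀ (p q : ℤ) (x y : L), x ∈ F p → y ∈ F q → ⁅x, y⁆ ∈ F (p + q)
  lie_P : ∀ (p q : ℤ) (x y : L), x ∈ P p → y ∈ P q → ⁅x, y⁆ ∈ P (p + q)

variable {R L : Type} [CommRing R] [LieRing L] [LieAlgebra R L]

/-- The graded Lie subalgebra `L' = ⊕ₙ L'ₙ` of a split-filtered Lie algebra. -/
def gradedPart (S : LieSplitFiltration R L) : LieSubalgebra R L :=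
  { (⨆ n : ℤ, S.P n : Submodule R L) with
    lie_mem' := by
      intro x y hx hy
      have hx' : x ∈ (⨆ n : ℤ, S.P n : Submodule R L) := hx
      have hy' : y ∈ (⨆ n : ℤ, S.P n : Submodule R L) := hy
      show ⁅x, y⁆ ∈ (⨆ n : ℤ, S.P n : Submodule R L)
      refine Submodule.iSup_induction (motive := fun z => ⁅x, z⁆ ∈ (⨆ n : ℤ, S.P n : Submodule R L))
        _ hy' (fun q z hz => ?_) (by simp) (fun z w hz hw => ?_)
      · refine Submodule.iSup_induction (motive := fun v => ⁅v, z⁆ ∈ (⨆ n : ℤ, S.P n : Submodule R L))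
          _ hx' (fun p v hv => ?_) (by simp) (fun v w hv hw => ?_)
        · exact Submodule.mem_iSup_of_mem (p + q) (S.lie_P p q v z hv hz)
        · simpa [add_lie] using add_mem hv hw
      · simpa [lie_add] using add_mem hz hw }

open UniversalEnvelopingAlgebra in
/-- The filtration `U(L)_{≤n}` of the universal enveloping algebra: the `R`-span of `1`
(for `n ≥ 0`) together with all products `ι(x₁)⋯ι(x_k)` with `xᵢ ∈ L_{≤nᵢ}` and
`n₁ + ⋯ + n_k ≤ n` (the empty product accounts for `1`). -/
def UEAle (S : LieSplitFiltration R L) (n : ℤ) :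
    Submodule R (UniversalEnvelopingAlgebra R L) :=
  Submodule.span R
    {x | ∃ l : List (ℤ × L), (∀ p ∈ l, p.2 ∈ S.F p.1) ∧ (l.map Prod.fst).sum ≤ n ∧
      x = (l.map fun p => ι R p.2).prod}

open UniversalEnvelopingAlgebra in
/-- The degree-`n` homogeneous component of the universal enveloping algebra
`U(L')` of the graded Lie subalgebra `L'`: the `R`-span of products
`ι(x₁)⋯ι(x_k)` with `xᵢ ∈ L'_{nᵢ}` homogeneous and `n₁ + ⋯ + n_k = n`. -/
def UEAgrade (S : LieSplitFiltration R L) (n : ℤ) :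
    Submodule R (UniversalEnvelopingAlgebra R ↥(gradedPart S)) :=
  Submodule.span R
    {x | ∃ l : List (ℤ × ↥(gradedPart S)), (∀ p ∈ l, (p.2 : L) ∈ S.P p.1) ∧
      (l.map Prod.fst).sum = n ∧ x = (l.map fun p => ι R p.2).prod}

attribute [local instance] LieRing.ofAssociativeRing

/-- The canonical algebra map `U(L') → U(L)` induced by the inclusion `L' ⊆ L`. -/
noncomputable def canMap (S : LieSplitFiltration R L) :
    UniversalEnvelopingAlgebra R ↥(gradedPart S) →ₐ[R] UniversalEnvelopingAlgebra R L :=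
  UniversalEnvelopingAlgebra.lift R
    ((UniversalEnvelopingAlgebra.ι R).comp (gradedPart S).incl)


namespace LieSplitFiltration

variable (S : LieSplitFiltration R L)

theorem F_mono : Monotone S.F := by
  have h : ∀ (k : ℕ) (n : ℤ), S.F n ≤ S.F (n + k) := by
    intro k
    induction k with
    | zero => simp
    | succ k ih => intro n; exact (ih n).trans (by simpa [add_assoc] using S.mono (n + k))
  intro a b hab
  obtain ⟨k, hk⟩ := Int.le.dest hab
  subst hk; exact h k a

theorem mem_F_of_le {a b : ℤ} (h : a ≤ b) {x : L} (hx : x ∈ S.F a) : x ∈ S.F b :=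
  S.F_mono h hx

open Classical in
/-- The `P n` component of an element of `F n`, extended by junk. -/
noncomputable def part (n : ℤ) (x : L) : L :=
  if h : ∃ p, p ∈ S.P n ∧ x - p ∈ S.F (n - 1) then h.choose else 0

theorem part_spec {n : ℤ} {x : L} (hx : x ∈ S.F n) :
    S.part n x ∈ S.P n ∧ x - S.part n x ∈ S.F (n - 1) := by
  have h : ∃ p, p ∈ S.P n ∧ x - p ∈ S.F (n - 1) := by
    rw [S.sup_eq n] at hx
    obtain ⟨p, hp, f, hf, rfl⟩ := Submodule.mem_sup.mp hx
    exact ⟨p, hp, by simpa using hf⟩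
  classical
  rw [part]
  rw [dif_pos h]
  exact h.choose_spec

theorem part_unique {n : ℤ} {x p : L} (hp : p ∈ S.P n) (hf : x - p ∈ S.F (n - 1)) :
    S.part n x = p := by
  have hx : x ∈ S.F n := by
    have := Submodule.add_mem (S.F n) (S.P_le_F n hp)
      (S.mem_F_of_le (by omega) hf)
    simpa using this
  obtain ⟨h1, h2⟩ := S.part_spec hx
  have key : S.part n x - p ∈ S.P n ⊓ S.F (n - 1) := by
    refine ⟨sub_mem h1 hp, ?_⟩
    have := sub_mem hf h2
    simpa using this
  rw [S.inf_eq n] at key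
  simpa [sub_eq_zero] using key

theorem part_zero (n : ℤ) : S.part n 0 = 0 :=
  S.part_unique (zero_mem _) (by simp)

theorem part_of_mem_lower {n : ℤ} {x : L} (hx : x ∈ S.F (n - 1)) : S.part n x = 0 :=
  S.part_unique (zero_mem _) (by simpa using hx)

theorem part_of_mem_P {n : ℤ} {x : L} (hx : x ∈ S.P n) : S.part n x = x :=
  S.part_unique hx (by simp)

theorem part_add {n : ℤ} {x y : L} (hx : x ∈ S.F n) (hy : y ∈ S.F n) :
    S.part n (x + y) = S.part n x + S.part n y := by
  obtain ⟨h1, h2⟩ := S.part_spec hx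
  obtain ⟨h3, h4⟩ := S.part_spec hy
  exact S.part_unique (add_mem h1 h3) (by
    have := add_mem h2 h4
    convert this using 1
    abel)

theorem part_smul {n : ℤ} (r : R) {x : L} (hx : x ∈ S.F n) :
    S.part n (r • x) = r • S.part n x := by
  obtain ⟨h1, h2⟩ := S.part_spec hx
  exact S.part_unique (Submodule.smul_mem _ r h1) (by
    have := Submodule.smul_mem _ r h2
    simpa [smul_sub] using this)

end LieSplitFiltration


namespace LieSplitFiltration

variable (S : LieSplitFiltration R L)

/-- `comps S k N x` is the degree `N - k` homogeneous component of `x ∈ F N`. -/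
noncomputable def comps (S : LieSplitFiltration R L) : ℕ → ℤ → L → L
  | 0, N, x => S.part N x
  | (k+1), N, x => comps S k (N-1) (x - S.part N x)

theorem comps_zero_eq (N : ℤ) (x : L) : S.comps 0 N x = S.part N x := rfl

theorem comps_succ (k : ℕ) (N : ℤ) (x : L) :
    S.comps (k+1) N x = S.comps k (N-1) (x - S.part N x) := rfl

theorem comps_mem {x : L} : ∀ (k : ℕ) (N : ℤ), x ∈ S.F N → S.comps k N x ∈ S.P (N - k) := by
  intro k
  induction k generalizing x with
  | zero => intro N hx; simpa [comps_zero_eq] using (S.part_spec hx).1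
  | succ k ih =>
    intro N hx
    have h := (S.part_spec hx).2
    rw [comps_succ]
    have := ih _ h
    rw [show (N - 1 - (k:ℤ)) = N - ((k:ℕ)+1 : ℕ) by push_cast; ring] at this
    exact this

theorem comps_remainder {x : L} :
    ∀ (k : ℕ) (N : ℤ), x ∈ S.F N →
      x - ∑ j ∈ Finset.range (k+1), S.comps j N x ∈ S.F (N - k - 1) := by
  intro k
  induction k generalizing x with
  | zero => intro N hx; simpa [comps_zero_eq] using (S.part_spec hx).2
  | succ k ih =>
    intro N hx
    have h := (S.part_spec hx).2
    have key := ih (N - 1) h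
    have hs : x - ∑ j ∈ Finset.range (k+1+1), S.comps j N x
        = (x - S.part N x) - ∑ j ∈ Finset.range (k+1), S.comps j (N-1) (x - S.part N x) := by
      rw [Finset.sum_range_succ']
      simp only [comps_succ, comps_zero_eq]
      abel
    rw [hs]
    rw [show (N - 1 - (k:ℤ) - 1) = N - ((k:ℕ)+1 : ℕ) - 1 by push_cast; ring] at key
    exact key

theorem comps_of_zero : ∀ (k : ℕ) (N : ℤ), S.comps k N 0 = 0 := by
  intro k
  induction k with
  | zero => intro N; simp [comps_zero_eq, S.part_zero]
  | succ k ih => intro N; rw [comps_succ, S.part_zero, sub_zero]; exact ih (N-1)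

theorem comps_shift {x : L} {N : ℤ} (hx : x ∈ S.F N) (k : ℕ) :
    S.comps (k+1) (N+1) x = S.comps k N x := by
  rw [comps_succ, S.part_of_mem_lower (by simpa using hx), sub_zero]
  norm_num

theorem comps_add {x y : L} : ∀ (k : ℕ) (N : ℤ), x ∈ S.F N → y ∈ S.F N →
    S.comps k N (x + y) = S.comps k N x + S.comps k N y := by
  intro k
  induction k generalizing x y with
  | zero => intro N hx hy; exact S.part_add hx hy
  | succ k ih =>
    intro N hx hy
    rw [comps_succ, comps_succ, comps_succ, S.part_add hx hy]
    rw [show x + y - (S.part N x + S.part N y) = (x - S.part N x) + (y - S.part N y) by abel]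
    exact ih _ (S.part_spec hx).2 (S.part_spec hy).2

theorem comps_smul (r : R) {x : L} : ∀ (k : ℕ) (N : ℤ), x ∈ S.F N →
    S.comps k N (r • x) = r • S.comps k N x := by
  intro k
  induction k generalizing x with
  | zero => intro N hx; exact S.part_smul r hx
  | succ k ih =>
    intro N hx
    rw [comps_succ, comps_succ, S.part_smul r hx, ← smul_sub]
    exact ih _ (S.part_spec hx).2

/-- The degree-`n` homogeneous component of any `x : L`. -/
noncomputable def sigma (n : ℤ) (x : L) : L :=
  S.comps ((max (S.exh x).choose n) - n).toNat (max (S.exh x).choose n) x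

theorem comps_stable {x : L} {N n : ℤ} (hx : x ∈ S.F N) (hn : n ≤ N) :
    ∀ j : ℕ, S.comps ((N + j - n)).toNat (N + j) x = S.comps (N - n).toNat N x := by
  intro j
  induction j with
  | zero => norm_num
  | succ j ih =>
    have hx' : x ∈ S.F (N + j) := S.mem_F_of_le (by omega) hx
    have h1 : ((N + ((j:ℕ)+1:ℕ) - n)).toNat = ((N + j - n)).toNat + 1 := by push_cast; omega
    have h2 : (N + ((j:ℕ)+1:ℕ) : ℤ) = (N + j) + 1 := by push_cast; ring
    rw [h1, h2, S.comps_shift hx', ih]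

theorem comps_indep {x : L} {N K n : ℤ} (hx : x ∈ S.F N) (hn : n ≤ N) (hK : N ≤ K) :
    S.comps (K - n).toNat K x = S.comps (N - n).toNat N x := by
  obtain ⟨j, hj⟩ := Int.le.dest hK
  subst hj
  exact S.comps_stable hx hn j

theorem sigma_eq {x : L} {N n : ℤ} (hx : x ∈ S.F N) (hn : n ≤ N) :
    S.sigma n x = S.comps (N - n).toNat N x := by
  have hxM : x ∈ S.F (max (S.exh x).choose n) :=
    S.mem_F_of_le (le_max_left _ _) (S.exh x).choose_spec
  have e1 := S.comps_indep hxM (le_max_right _ _)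
    (le_max_left (max (S.exh x).choose n) (max N n))
  have e2 := S.comps_indep (x := x) (N := max N n) (K := max (max (S.exh x).choose n) (max N n))
    (S.mem_F_of_le (le_max_left _ _) hx) (le_max_right _ _) (le_max_right _ _)
  have e3 := S.comps_indep (x := x) (N := N) (K := max N n) hx hn (le_max_left _ _)
  rw [sigma, ← e1, e2, e3]

theorem sigma_mem (n : ℤ) (x : L) : S.sigma n x ∈ S.P n := by
  have hxM : x ∈ S.F (max (S.exh x).choose n) :=
    S.mem_F_of_le (le_max_left _ _) (S.exh x).choose_spec
  have := S.comps_mem ((max (S.exh x).choose n) - n).toNat _ hxM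
  rw [show ((max (S.exh x).choose n) - (((max (S.exh x).choose n) - n).toNat : ℕ) : ℤ) = n by
    have := le_max_right (S.exh x).choose n; omega] at this
  exact this

theorem sigma_of_mem_lower {n : ℤ} {x : L} (hx : x ∈ S.F (n - 1)) : S.sigma n x = 0 := by
  rw [S.sigma_eq (S.mem_F_of_le (by omega) hx) le_rfl]
  simpa [comps_zero_eq] using S.part_of_mem_lower hx

theorem sigma_zero_of_gt {n N : ℤ} {x : L} (hx : x ∈ S.F N) (h : N < n) : S.sigma n x = 0 :=
  S.sigma_of_mem_lower (S.mem_F_of_le (by omega) hx)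

theorem sigma_of_mem_P {n k : ℤ} {x : L} (hx : x ∈ S.P k) :
    S.sigma n x = if n = k then x else 0 := by
  rcases lt_trichotomy n k with h | h | h
  · rw [if_neg (by omega)]
    rw [S.sigma_eq (S.P_le_F k hx) (by omega)]
    rw [show (k - n).toNat = (k - n - 1).toNat + 1 by omega]
    rw [comps_succ, S.part_of_mem_P hx, sub_self]
    exact S.comps_of_zero _ _
  · subst h
    rw [if_pos rfl, S.sigma_eq (S.P_le_F n hx) le_rfl]
    simpa [comps_zero_eq] using S.part_of_mem_P hx
  · rw [if_neg (by omega)]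
    exact S.sigma_of_mem_lower (S.mem_F_of_le (by omega) (S.P_le_F k hx))

theorem sigma_add (n : ℤ) (x y : L) : S.sigma n (x + y) = S.sigma n x + S.sigma n y := by
  obtain ⟨Nx, hNx⟩ := S.exh x
  obtain ⟨Ny, hNy⟩ := S.exh y
  have hx : x ∈ S.F (max (max Nx Ny) n) := S.mem_F_of_le (by simp [le_max_iff]) hNx
  have hy : y ∈ S.F (max (max Nx Ny) n) := S.mem_F_of_le (by simp [le_max_iff]) hNy
  have hn : n ≤ max (max Nx Ny) n := le_max_right _ _
  rw [S.sigma_eq (add_mem hx hy) hn, S.sigma_eq hx hn, S.sigma_eq hy hn]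
  exact S.comps_add _ _ hx hy

theorem sigma_smul (n : ℤ) (r : R) (x : L) : S.sigma n (r • x) = r • S.sigma n x := by
  obtain ⟨Nx, hNx⟩ := S.exh x
  have hx : x ∈ S.F (max Nx n) := S.mem_F_of_le (le_max_left _ _) hNx
  have hn : n ≤ max Nx n := le_max_right _ _
  rw [S.sigma_eq (Submodule.smul_mem _ r hx) hn, S.sigma_eq hx hn]
  exact S.comps_smul r _ _ hx

theorem sigma_remainder {x : L} {N n : ℤ} (hx : x ∈ S.F N) (hn : n ≤ N) :
    x - ∑ m ∈ Finset.Icc n N, S.sigma m x ∈ S.F (n - 1) := by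
  have key := S.comps_remainder (N - n).toNat N hx
  have hsum : ∑ j ∈ Finset.range ((N - n).toNat + 1), S.comps j N x
      = ∑ m ∈ Finset.Icc n N, S.sigma m x := by
    refine Finset.sum_nbij' (i := fun j => N - j) (j := fun m => (N - m).toNat) ?_ ?_ ?_ ?_ ?_
    · intro j hj
      simp only [Finset.mem_range] at hj
      simp only [Finset.mem_Icc]
      omega
    · intro m hm
      simp only [Finset.mem_Icc] at hm
      simp only [Finset.mem_range]
      omega
    · intro j hj
      simp only [Finset.mem_range] at hj
      beta_reduce
      omega
    · intro m hm
      simp only [Finset.mem_Icc] at hm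
      beta_reduce
      omega
    · intro j hj
      simp only [Finset.mem_range] at hj
      rw [S.sigma_eq hx (show N - (j:ℤ) ≤ N by omega)]
      congr 1
      omega
  rw [← hsum]
  have he : (N - ((N - n).toNat : ℕ) - 1 : ℤ) = n - 1 := by omega
  rw [← he]
  exact key

end LieSplitFiltration



namespace LieSplitFiltration

open UniversalEnvelopingAlgebra OrderDual

variable (S : LieSplitFiltration R L)

theorem mem_gradedPart_of_mem_P {n : ℤ} {x : L} (hx : x ∈ S.P n) : x ∈ gradedPart S :=
  show x ∈ (⨆ m : ℤ, S.P m : Submodule R L) from Submodule.mem_iSup_of_mem n hx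

theorem sigma_zero' (n : ℤ) : S.sigma n (0 : L) = 0 :=
  S.sigma_of_mem_lower (zero_mem _)

theorem sigma_finset_sum {α : Type} (n : ℤ) (s : Finset α) (f : α → L) :
    S.sigma n (∑ i ∈ s, f i) = ∑ i ∈ s, S.sigma n (f i) := by
  classical
  induction s using Finset.induction_on with
  | empty => simpa using S.sigma_zero' n
  | insert _ _ h ih => rw [Finset.sum_insert h, Finset.sum_insert h, S.sigma_add, ih]

theorem lie_finset_sum' {α : Type} (x : L) (s : Finset α) (f : α → L) :
    ⁅x, ∑ i ∈ s, f i⁆ = ∑ i ∈ s, ⁅x, f i⁆ := by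
  classical
  induction s using Finset.induction_on with
  | empty => simp
  | insert _ _ h ih => rw [Finset.sum_insert h, Finset.sum_insert h, lie_add, ih]

theorem finset_sum_lie' {α : Type} (x : L) (s : Finset α) (f : α → L) :
    ⁅∑ i ∈ s, f i, x⁆ = ∑ i ∈ s, ⁅f i, x⁆ := by
  classical
  induction s using Finset.induction_on with
  | empty => simp
  | insert _ _ h ih => rw [Finset.sum_insert h, Finset.sum_insert h, add_lie, ih]

/-- The key identity: the degree-`m` component of a bracket is the sum of brackets of
components. -/
theorem sigma_lie {x y : L} {Nx Ny : ℤ} (hx : x ∈ S.F Nx) (hy : y ∈ S.F Ny)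
    {m : ℤ} (hm : m ≤ Nx + Ny) :
    S.sigma m ⁅x, y⁆ = ∑ p ∈ Finset.Icc (m - Ny) Nx, ∑ q ∈ Finset.Icc (m - Nx) Ny,
      if p + q = m then ⁅S.sigma p x, S.sigma q y⁆ else 0 := by
  have ha : m - Ny ≤ Nx := by omega
  have hb : m - Nx ≤ Ny := by omega
  set X := ∑ p ∈ Finset.Icc (m - Ny) Nx, S.sigma p x with hX
  set Y := ∑ q ∈ Finset.Icc (m - Nx) Ny, S.sigma q y with hY
  have hrx : x - X ∈ S.F (m - Ny - 1) := S.sigma_remainder hx ha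
  have hry : y - Y ∈ S.F (m - Nx - 1) := S.sigma_remainder hy hb
  have hXF : X ∈ S.F Nx := by
    rw [hX]
    refine Submodule.sum_mem _ fun p hp => ?_
    simp only [Finset.mem_Icc] at hp
    exact S.mem_F_of_le hp.2 (S.P_le_F p (S.sigma_mem p x))
  have hsplit : ⁅x, y⁆ = ⁅x - X, y⁆ + ⁅X, y - Y⁆ + ⁅X, Y⁆ := by
    simp only [sub_lie, lie_sub]
    abel
  rw [hsplit, S.sigma_add, S.sigma_add]
  have h1 : S.sigma m ⁅x - X, y⁆ = 0 := by
    refine S.sigma_of_mem_lower (S.mem_F_of_le (show m - Ny - 1 + Ny ≤ m - 1 by omega) ?_)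
    exact S.lie_F _ _ _ _ hrx hy
  have h2 : S.sigma m ⁅X, y - Y⁆ = 0 := by
    refine S.sigma_of_mem_lower (S.mem_F_of_le (show Nx + (m - Nx - 1) ≤ m - 1 by omega) ?_)
    exact S.lie_F _ _ _ _ hXF hry
  have h3 : S.sigma m ⁅X, Y⁆ = ∑ p ∈ Finset.Icc (m - Ny) Nx, ∑ q ∈ Finset.Icc (m - Nx) Ny,
      if p + q = m then ⁅S.sigma p x, S.sigma q y⁆ else 0 := by
    rw [hX, hY, finset_sum_lie', S.sigma_finset_sum]
    refine Finset.sum_congr rfl fun p _ => ?_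
    rw [lie_finset_sum', S.sigma_finset_sum]
    refine Finset.sum_congr rfl fun q _ => ?_
    have hmem : ⁅S.sigma p x, S.sigma q y⁆ ∈ S.P (p + q) :=
      S.lie_P p q _ _ (S.sigma_mem p x) (S.sigma_mem q y)
    rw [S.sigma_of_mem_P hmem]
    exact if_congr eq_comm rfl rfl
  rw [h1, h2, h3]
  simp

/-- `sigma` as a linear map into the graded part. -/
noncomputable def sigmaG (n : ℤ) : L →ₗ[R] ↥(gradedPart S) where
  toFun x := ⟨S.sigma n x, mem_gradedPart_of_mem_P S (S.sigma_mem n x)⟩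
  map_add' x y := Subtype.ext (S.sigma_add n x y)
  map_smul' r x := Subtype.ext (S.sigma_smul n r x)

@[simp] theorem sigmaG_coe (n : ℤ) (x : L) :
    ((S.sigmaG n x : ↥(gradedPart S)) : L) = S.sigma n x := rfl

/-- `ι` for the graded part, as a linear map. -/
noncomputable def iotaG : ↥(gradedPart S) →ₗ[R] UniversalEnvelopingAlgebra R ↥(gradedPart S) :=
  (ι R).toLinearMap

@[simp] theorem iotaG_apply (x : ↥(gradedPart S)) : S.iotaG x = ι R x := rfl

theorem isPWO_of_bddAbove (s : Set ℤᵒᵈ) (N : ℤ) (h : ∀ m ∈ s, ofDual m ≤ N) : s.IsPWO := by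
  have hb : BddBelow s := ⟨toDual N, fun m hm => h m hm⟩
  have hw : s.IsWF := hb.wellFoundedOn_lt
  exact hw.isPWO

/-- The map `ψ : L → completed U(L')` sending `x` to the series of its components. -/
noncomputable def psiFun (x : L) : HahnSeries ℤᵒᵈ (UniversalEnvelopingAlgebra R ↥(gradedPart S)) where
  coeff n := S.iotaG (S.sigmaG (ofDual n) x)
  isPWO_support' := by
    refine isPWO_of_bddAbove _ (S.exh x).choose fun m hm => ?_
    by_contra hcon
    push_neg at hcon
    apply hm
    have h0 : S.sigma (ofDual m) x = 0 :=
      S.sigma_zero_of_gt (S.exh x).choose_spec hcon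
    show S.iotaG (S.sigmaG (ofDual m) x) = 0
    have : S.sigmaG (ofDual m) x = 0 := Subtype.ext h0
    rw [this, map_zero]

theorem psiFun_coeff (x : L) (n : ℤᵒᵈ) :
    (S.psiFun x).coeff n = S.iotaG (S.sigmaG (ofDual n) x) := rfl

theorem psiFun_coeff_zero_of_gt {x : L} {N : ℤ} (hx : x ∈ S.F N) {m : ℤ} (h : N < m) :
    (S.psiFun x).coeff (toDual m) = 0 := by
  rw [psiFun_coeff]
  have : S.sigmaG (ofDual (toDual m)) x = 0 := Subtype.ext (S.sigma_zero_of_gt hx h)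
  rw [this, map_zero]

/-- `ψ` as a linear map. -/
noncomputable def psiL : L →ₗ[R] HahnSeries ℤᵒᵈ (UniversalEnvelopingAlgebra R ↥(gradedPart S)) where
  toFun := S.psiFun
  map_add' x y := by
    ext n
    simp only [psiFun_coeff, HahnSeries.coeff_add, map_add]
  map_smul' r x := by
    ext n
    simp only [psiFun_coeff, HahnSeries.coeff_smul, map_smul, RingHom.id_apply]

theorem psiFun_of_mem_P {k : ℤ} {x : L} (hx : x ∈ S.P k) :
    S.psiFun x = HahnSeries.single (toDual k)
      (ι R (⟨x, mem_gradedPart_of_mem_P S hx⟩ : ↥(gradedPart S))) := by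
  ext n
  rw [psiFun_coeff, HahnSeries.coeff_single]
  by_cases h : n = toDual k
  · rw [if_pos h]
    have hk : ofDual n = k := by rw [h]; rfl
    show S.iotaG _ = ι R _
    rw [iotaG_apply]
    congr 1
    exact Subtype.ext (by simp [S.sigma_of_mem_P hx, hk])
  · rw [if_neg h]
    have hne : ofDual n ≠ k := fun hc => h (by simpa using congrArg toDual hc)
    have hz : S.sigmaG (ofDual n) x = 0 := Subtype.ext (by simp [S.sigma_of_mem_P hx, hne])
    rw [hz, map_zero]

end LieSplitFiltration


namespace LieSplitFiltration

open UniversalEnvelopingAlgebra OrderDual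

section HahnHelpers

variable {A : Type} [Ring A]

theorem hahn_coeff_sum {α : Type} (s : Finset α) (f : α → HahnSeries ℤᵒᵈ A) (n : ℤᵒᵈ) :
    (∑ i ∈ s, f i).coeff n = ∑ i ∈ s, (f i).coeff n :=
  map_sum (HahnSeries.coeff.addMonoidHom n) f s

theorem hahn_coeff_sub (f g : HahnSeries ℤᵒᵈ A) (n : ℤᵒᵈ) :
    (f - g).coeff n = f.coeff n - g.coeff n :=
  map_sub (HahnSeries.coeff.addMonoidHom n) f g

theorem hahn_mul_coeff_eq_zero {f g : HahnSeries ℤᵒᵈ A} {Nf Ng m : ℤ}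
    (hf : ∀ m' : ℤ, Nf < m' → f.coeff (toDual m') = 0)
    (hg : ∀ m' : ℤ, Ng < m' → g.coeff (toDual m') = 0)
    (h : Nf + Ng < m) : (f * g).coeff (toDual m) = 0 := by
  rw [HahnSeries.coeff_mul]
  refine Finset.sum_eq_zero fun ij hij => ?_
  rw [Finset.mem_addAntidiagonal] at hij
  obtain ⟨h1, h2, h3⟩ := hij
  have b1 : ofDual ij.1 ≤ Nf := by
    by_contra hc
    exact h1 (hf _ (lt_of_not_ge hc))
  have b2 : ofDual ij.2 ≤ Ng := by
    by_contra hc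
    exact h2 (hg _ (lt_of_not_ge hc))
  have hsum : ofDual ij.1 + ofDual ij.2 = m := congrArg ofDual h3
  exfalso
  omega

theorem hahn_single_sum_coeff_eq_zero {a N : ℤ} (c : ℤ → A) {m : ℤ} (h : N < m) :
    (∑ p ∈ Finset.Icc a N, HahnSeries.single (toDual p) (c p)).coeff (toDual m) = 0 := by
  rw [hahn_coeff_sum]
  refine Finset.sum_eq_zero fun p hp => ?_
  simp only [Finset.mem_Icc] at hp
  refine HahnSeries.coeff_single_of_ne fun hc => ?_
  have : m = p := congrArg ofDual hc
  omega

end HahnHelpers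

variable (S : LieSplitFiltration R L)

theorem psiL_apply (x : L) : S.psiL x = S.psiFun x := rfl

theorem psiL_bound {x : L} {N : ℤ} (hx : x ∈ S.F N) {m : ℤ} (h : N < m) :
    (S.psiL x).coeff (toDual m) = 0 :=
  S.psiFun_coeff_zero_of_gt hx h

theorem psiL_of_mem_P {k : ℤ} {x : L} (hx : x ∈ S.P k) :
    S.psiL x = HahnSeries.single (toDual k)
      (ι R (⟨x, mem_gradedPart_of_mem_P S hx⟩ : ↥(gradedPart S))) :=
  S.psiFun_of_mem_P hx

theorem psiL_sigma (p : ℤ) (x : L) :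
    S.psiL (S.sigma p x) = HahnSeries.single (toDual p) (ι R (S.sigmaG p x)) := by
  rw [S.psiL_of_mem_P (S.sigma_mem p x)]
  rfl

/-- decomposition of `ψ x` into leading singles plus a low-order tail. -/
theorem psiL_decomp {x : L} {N : ℤ} (hx : x ∈ S.F N) {a : ℤ} (ha : a ≤ N) :
    S.psiL x = (∑ p ∈ Finset.Icc a N, HahnSeries.single (toDual p) (ι R (S.sigmaG p x)))
      + S.psiL (x - ∑ p ∈ Finset.Icc a N, S.sigma p x) := by
  have : x = (∑ p ∈ Finset.Icc a N, S.sigma p x) + (x - ∑ p ∈ Finset.Icc a N, S.sigma p x) := by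
    abel
  conv_lhs => rw [this]
  rw [map_add, map_sum]
  congr 1
  exact Finset.sum_congr rfl fun p _ => S.psiL_sigma p x

theorem psi_lie_coeff (x y : L) (m : ℤ) :
    (S.psiL ⁅x, y⁆).coeff (toDual m)
      = (S.psiL x * S.psiL y - S.psiL y * S.psiL x).coeff (toDual m) := by
  obtain ⟨Nx, hx⟩ := S.exh x
  obtain ⟨Ny, hy⟩ := S.exh y
  have hxy : ⁅x, y⁆ ∈ S.F (Nx + Ny) := S.lie_F _ _ _ _ hx hy
  have bx : ∀ m' : ℤ, Nx < m' → (S.psiL x).coeff (toDual m') = 0 :=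
    fun m' h => S.psiL_bound hx h
  have by' : ∀ m' : ℤ, Ny < m' → (S.psiL y).coeff (toDual m') = 0 :=
    fun m' h => S.psiL_bound hy h
  by_cases hm : m ≤ Nx + Ny
  swap
  · rw [hahn_coeff_sub, S.psiL_bound hxy (by omega),
      hahn_mul_coeff_eq_zero bx by' (by omega),
      hahn_mul_coeff_eq_zero by' bx (by omega)]
    simp
  -- main case
  · have ha : m - Ny ≤ Nx := by omega
    have hb : m - Nx ≤ Ny := by omega
    set X := ∑ p ∈ Finset.Icc (m - Ny) Nx, S.sigma p x with hX
    set Y := ∑ q ∈ Finset.Icc (m - Nx) Ny, S.sigma q y with hY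
    have hrx : x - X ∈ S.F (m - Ny - 1) := S.sigma_remainder hx ha
    have hry : y - Y ∈ S.F (m - Nx - 1) := S.sigma_remainder hy hb
    have brx : ∀ m' : ℤ, m - Ny - 1 < m' → (S.psiL (x - X)).coeff (toDual m') = 0 :=
      fun m' h => S.psiL_bound hrx h
    have bry : ∀ m' : ℤ, m - Nx - 1 < m' → (S.psiL (y - Y)).coeff (toDual m') = 0 :=
      fun m' h => S.psiL_bound hry h
    set A := ∑ p ∈ Finset.Icc (m - Ny) Nx, HahnSeries.single (toDual p) (ι R (S.sigmaG p x))
      with hA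
    set B := ∑ q ∈ Finset.Icc (m - Nx) Ny, HahnSeries.single (toDual q) (ι R (S.sigmaG q y))
      with hB
    have bA : ∀ m' : ℤ, Nx < m' → A.coeff (toDual m') = 0 :=
      fun m' h => hahn_single_sum_coeff_eq_zero _ h
    have bB : ∀ m' : ℤ, Ny < m' → B.coeff (toDual m') = 0 :=
      fun m' h => hahn_single_sum_coeff_eq_zero _ h
    have hdx : S.psiL x = A + S.psiL (x - X) := S.psiL_decomp hx ha
    have hdy : S.psiL y = B + S.psiL (y - Y) := S.psiL_decomp hy hb
    -- expand the products
    have exy : (S.psiL x * S.psiL y).coeff (toDual m) = (A * B).coeff (toDual m) := by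
      rw [hdx, hdy, add_mul, mul_add, mul_add, HahnSeries.coeff_add, HahnSeries.coeff_add,
        HahnSeries.coeff_add,
        hahn_mul_coeff_eq_zero bA bry (by omega),
        hahn_mul_coeff_eq_zero brx bB (by omega),
        hahn_mul_coeff_eq_zero brx bry (by omega)]
      simp
    have eyx : (S.psiL y * S.psiL x).coeff (toDual m) = (B * A).coeff (toDual m) := by
      rw [hdx, hdy, add_mul, mul_add, mul_add, HahnSeries.coeff_add, HahnSeries.coeff_add,
        HahnSeries.coeff_add,
        hahn_mul_coeff_eq_zero bB brx (by omega),
        hahn_mul_coeff_eq_zero bry bA (by omega),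
        hahn_mul_coeff_eq_zero bry brx (by omega)]
      simp
    rw [hahn_coeff_sub, exy, eyx]
    -- compute (A*B) and (B*A) coefficients
    have eAB : (A * B).coeff (toDual m) = ∑ p ∈ Finset.Icc (m - Ny) Nx,
        ∑ q ∈ Finset.Icc (m - Nx) Ny,
          if p + q = m then ι R (S.sigmaG p x) * ι R (S.sigmaG q y) else 0 := by
      rw [hA, hB, Finset.sum_mul_sum, hahn_coeff_sum]
      refine Finset.sum_congr rfl fun p _ => ?_
      rw [hahn_coeff_sum]
      refine Finset.sum_congr rfl fun q _ => ?_
      rw [HahnSeries.single_mul_single, HahnSeries.coeff_single]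
      by_cases hpq : p + q = m
      · rw [if_pos (show toDual m = toDual p + toDual q from congrArg toDual hpq.symm),
          if_pos hpq]
      · rw [if_neg (show ¬(toDual m = toDual p + toDual q) from
            fun hc => hpq ((congrArg ofDual hc).symm)), if_neg hpq]
    have eBA : (B * A).coeff (toDual m) = ∑ p ∈ Finset.Icc (m - Ny) Nx,
        ∑ q ∈ Finset.Icc (m - Nx) Ny,
          if p + q = m then ι R (S.sigmaG q y) * ι R (S.sigmaG p x) else 0 := by
      have step : (B * A).coeff (toDual m) = ∑ q ∈ Finset.Icc (m - Nx) Ny,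
          ∑ p ∈ Finset.Icc (m - Ny) Nx,
            if p + q = m then ι R (S.sigmaG q y) * ι R (S.sigmaG p x) else 0 := by
        rw [hA, hB, Finset.sum_mul_sum, hahn_coeff_sum]
        refine Finset.sum_congr rfl fun q _ => ?_
        rw [hahn_coeff_sum]
        refine Finset.sum_congr rfl fun p _ => ?_
        rw [HahnSeries.single_mul_single, HahnSeries.coeff_single]
        by_cases hpq : p + q = m
        · rw [if_pos (show toDual m = toDual q + toDual p from
            congrArg toDual (by omega : m = q + p)), if_pos hpq]
        · rw [if_neg (show ¬(toDual m = toDual q + toDual p) from fun hc => hpq (by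
            have h' : q + p = m := (congrArg ofDual hc).symm
            omega)), if_neg hpq]
      rw [step, Finset.sum_comm]
    rw [eAB, eBA]
    -- now the left side
    have hsG : S.sigmaG m ⁅x, y⁆ = ∑ p ∈ Finset.Icc (m - Ny) Nx,
        ∑ q ∈ Finset.Icc (m - Nx) Ny,
          if p + q = m then ⁅S.sigmaG p x, S.sigmaG q y⁆ else 0 := by
      apply Subtype.ext
      push_cast
      rw [show ((S.sigmaG m ⁅x, y⁆ : ↥(gradedPart S)) : L) = S.sigma m ⁅x, y⁆ from rfl]
      rw [S.sigma_lie hx hy hm]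
      refine Finset.sum_congr rfl fun p _ => Finset.sum_congr rfl fun q _ => ?_
      by_cases hpq : p + q = m <;> simp [hpq]
    have lhs : (S.psiL ⁅x, y⁆).coeff (toDual m) = S.iotaG (S.sigmaG m ⁅x, y⁆) := rfl
    rw [lhs, hsG, map_sum]
    rw [← Finset.sum_sub_distrib]
    refine Finset.sum_congr rfl fun p _ => ?_
    rw [map_sum, ← Finset.sum_sub_distrib]
    refine Finset.sum_congr rfl fun q _ => ?_
    by_cases hpq : p + q = m
    · rw [if_pos hpq, if_pos hpq, if_pos hpq, iotaG_apply, LieHom.map_lie, Ring.lie_def]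
    · rw [if_neg hpq, if_neg hpq, if_neg hpq, map_zero]
      simp

end LieSplitFiltration


namespace LieSplitFiltration

open UniversalEnvelopingAlgebra OrderDual

variable (S : LieSplitFiltration R L)

theorem psi_lie (x y : L) : S.psiL ⁅x, y⁆ = ⁅S.psiL x, S.psiL y⁆ := by
  ext n
  rw [Ring.lie_def]
  exact S.psi_lie_coeff x y (ofDual n)

/-- `ψ` as a Lie algebra morphism into the Hahn-series completion of `U(L')`. -/
noncomputable def psiHom :
    L →ₗ⁅R⁆ HahnSeries ℤᵒᵈ (UniversalEnvelopingAlgebra R ↥(gradedPart S)) :=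
  { S.psiL with
    map_lie' := by intro x y; exact S.psi_lie x y }

/-- The induced algebra map `Φ : U(L) → completed U(L')`. -/
noncomputable def Phi : UniversalEnvelopingAlgebra R L →ₐ[R]
    HahnSeries ℤᵒᵈ (UniversalEnvelopingAlgebra R ↥(gradedPart S)) :=
  UniversalEnvelopingAlgebra.lift R S.psiHom

theorem Phi_iota (x : L) : S.Phi (ι R x) = S.psiL x :=
  UniversalEnvelopingAlgebra.lift_ι_apply R S.psiHom x

theorem canMap_iota (x : ↥(gradedPart S)) : canMap S (ι R x) = ι R (x : L) :=
  UniversalEnvelopingAlgebra.lift_ι_apply R _ x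

theorem Phi_canMap_prod (l : List (ℤ × ↥(gradedPart S)))
    (hl : ∀ p ∈ l, (p.2 : L) ∈ S.P p.1) :
    S.Phi (canMap S ((l.map fun p => ι R p.2).prod))
      = HahnSeries.single (toDual (l.map Prod.fst).sum) ((l.map fun p => ι R p.2).prod) := by
  induction l with
  | nil =>
    simp only [List.map_nil, List.prod_nil, List.sum_nil, map_one]
    exact (HahnSeries.single_zero_one).symm
  | cons p t ih =>
    simp only [List.map_cons, List.prod_cons, List.sum_cons, map_mul]
    rw [ih (fun q hq => hl q (List.mem_cons_of_mem p hq))]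
    rw [canMap_iota, Phi_iota, S.psiL_of_mem_P (hl p List.mem_cons_self)]
    rw [show (⟨((p.2 : L)), mem_gradedPart_of_mem_P S (hl p List.mem_cons_self)⟩ :
        ↥(gradedPart S)) = p.2 from Subtype.coe_eta _ _]
    rw [HahnSeries.single_mul_single]
    rfl

theorem Phi_canMap {n : ℤ} {u : UniversalEnvelopingAlgebra R ↥(gradedPart S)}
    (hu : u ∈ UEAgrade S n) :
    S.Phi (canMap S u) = HahnSeries.single (toDual n) u := by
  induction hu using Submodule.span_induction with
  | mem x hx =>
    obtain ⟨l, hl, hsum, rfl⟩ := hx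
    rw [S.Phi_canMap_prod l hl, hsum]
  | zero => simp [HahnSeries.single_eq_zero]
  | add x y _ _ hx hy =>
    rw [map_add, map_add, hx, hy]
    exact (map_add (HahnSeries.single.addMonoidHom (toDual n)) x y).symm
  | smul r x _ hx =>
    rw [map_smul, map_smul, hx]
    exact (map_smul (HahnSeries.single.linearMap (R := R) (toDual n)) r x).symm

theorem Phi_prod_bound (l : List (ℤ × L)) (hl : ∀ p ∈ l, p.2 ∈ S.F p.1) :
    ∀ m : ℤ, (l.map Prod.fst).sum < m →
      (S.Phi ((l.map fun p => ι R p.2).prod)).coeff (toDual m) = 0 := by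
  induction l with
  | nil =>
    intro m hm
    simp only [List.map_nil, List.prod_nil, List.sum_nil] at *
    rw [map_one, ← HahnSeries.single_zero_one, HahnSeries.coeff_single]
    rw [if_neg (show ¬(toDual m = (0 : ℤᵒᵈ)) from fun hc => by
      have : m = (0 : ℤ) := congrArg ofDual hc
      omega)]
  | cons p t ih =>
    intro m hm
    simp only [List.map_cons, List.prod_cons, List.sum_cons] at *
    rw [map_mul, Phi_iota]
    refine hahn_mul_coeff_eq_zero (Nf := p.1) (Ng := (t.map Prod.fst).sum)
      (fun m' h => S.psiL_bound (hl p List.mem_cons_self) h)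
      (fun m' h => ih (fun q hq => hl q (List.mem_cons_of_mem p hq)) m' h) (by omega)

theorem Phi_UEAle_bound {n : ℤ} {u : UniversalEnvelopingAlgebra R L} (hu : u ∈ UEAle S n)
    {m : ℤ} (hm : n < m) : (S.Phi u).coeff (toDual m) = 0 := by
  induction hu using Submodule.span_induction with
  | mem x hx =>
    obtain ⟨l, hl, hsum, rfl⟩ := hx
    exact S.Phi_prod_bound l hl m (by omega)
  | zero => simp
  | add x y _ _ hx hy => rw [map_add, HahnSeries.coeff_add, hx, hy, add_zero]
  | smul r x _ hx => rw [map_smul, HahnSeries.coeff_smul, hx, smul_zero]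

end LieSplitFiltration


namespace LieSplitFiltration

open UniversalEnvelopingAlgebra OrderDual

variable (S : LieSplitFiltration R L)

theorem prod_mem_UEAle {n : ℤ} (l : List (ℤ × L)) (hl : ∀ p ∈ l, p.2 ∈ S.F p.1)
    (hsum : (l.map Prod.fst).sum ≤ n) : (l.map fun p => ι R p.2).prod ∈ UEAle S n :=
  Submodule.subset_span ⟨l, hl, hsum, rfl⟩

theorem UEAle_mono {a b : ℤ} (h : a ≤ b) : UEAle S a ≤ UEAle S b :=
  Submodule.span_mono fun x ⟨l, hl, hsum, hx⟩ => ⟨l, hl, by omega, hx⟩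

theorem mul_mem_UEAle {a b : ℤ} {u v : UniversalEnvelopingAlgebra R L}
    (hu : u ∈ UEAle S a) (hv : v ∈ UEAle S b) : u * v ∈ UEAle S (a + b) := by
  induction hu using Submodule.span_induction with
  | mem x hx =>
    obtain ⟨l, hl, hsum, rfl⟩ := hx
    induction hv using Submodule.span_induction with
    | mem y hy =>
      obtain ⟨l', hl', hsum', rfl⟩ := hy
      rw [← List.prod_append, ← List.map_append]
      refine S.prod_mem_UEAle (l ++ l') (fun p hp => ?_) ?_
      · rcases List.mem_append.mp hp with h | h
        · exact hl p h
        · exact hl' p h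
      · rw [List.map_append, List.sum_append]
        omega
    | zero => rw [mul_zero]; exact zero_mem _
    | add y z _ _ hy hz => rw [mul_add]; exact add_mem hy hz
    | smul r y _ hy => rw [mul_smul_comm]; exact Submodule.smul_mem _ r hy
  | zero => rw [zero_mul]; exact zero_mem _
  | add y z _ _ hy hz => rw [add_mul]; exact add_mem hy hz
  | smul r y _ hy => rw [smul_mul_assoc]; exact Submodule.smul_mem _ r hy

theorem iota_mem_UEAgrade {k : ℤ} (z : ↥(gradedPart S)) (hz : (z : L) ∈ S.P k) :
    ι R z ∈ UEAgrade S k :=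
  Submodule.subset_span ⟨[(k, z)], by simpa using hz, by simp, by simp⟩

theorem one_mem_UEAgrade_zero : (1 : UniversalEnvelopingAlgebra R ↥(gradedPart S))
    ∈ UEAgrade S 0 :=
  Submodule.subset_span ⟨[], by simp, by simp, by simp⟩

theorem mul_mem_UEAgrade {a b : ℤ} {u v : UniversalEnvelopingAlgebra R ↥(gradedPart S)}
    (hu : u ∈ UEAgrade S a) (hv : v ∈ UEAgrade S b) : u * v ∈ UEAgrade S (a + b) := by
  induction hu using Submodule.span_induction with
  | mem x hx =>
    obtain ⟨l, hl, hsum, rfl⟩ := hx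
    induction hv using Submodule.span_induction with
    | mem y hy =>
      obtain ⟨l', hl', hsum', rfl⟩ := hy
      rw [← List.prod_append, ← List.map_append]
      refine Submodule.subset_span ⟨l ++ l', fun p hp => ?_, ?_, rfl⟩
      · rcases List.mem_append.mp hp with h | h
        · exact hl p h
        · exact hl' p h
      · rw [List.map_append, List.sum_append]
        omega
    | zero => rw [mul_zero]; exact zero_mem _
    | add y z _ _ hy hz => rw [mul_add]; exact add_mem hy hz
    | smul r y _ hy => rw [mul_smul_comm]; exact Submodule.smul_mem _ r hy
  | zero => rw [zero_mul]; exact zero_mem _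
  | add y z _ _ hy hz => rw [add_mul]; exact add_mem hy hz
  | smul r y _ hy => rw [smul_mul_assoc]; exact Submodule.smul_mem _ r hy

/-- The expansion lemma: any spanning product of `U(L)_{≤n}` of exact degree `n` lies in
the sum of the image of `U(L')ₙ` and `U(L)_{≤n-1}`. -/
theorem prod_mem_sup (l : List (ℤ × L)) (hl : ∀ p ∈ l, p.2 ∈ S.F p.1) :
    (l.map fun p => ι R p.2).prod ∈
      (UEAgrade S (l.map Prod.fst).sum).map (canMap S).toLinearMap
        ⊔ UEAle S ((l.map Prod.fst).sum - 1) := by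
  induction l with
  | nil =>
    simp only [List.map_nil, List.prod_nil, List.sum_nil]
    exact Submodule.mem_sup_left ⟨1, S.one_mem_UEAgrade_zero, map_one (canMap S)⟩
  | cons p t ih =>
    have hp2 : p.2 ∈ S.F p.1 := hl p List.mem_cons_self
    rw [S.sup_eq p.1] at hp2
    obtain ⟨z, hz, w, hw, hzw⟩ := Submodule.mem_sup.mp hp2
    simp only [List.map_cons, List.prod_cons, List.sum_cons]
    have hT := ih (fun q hq => hl q (List.mem_cons_of_mem p hq))
    obtain ⟨v', hv', t0, ht0, hTt⟩ := Submodule.mem_sup.mp hT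
    obtain ⟨v, hv, rfl⟩ := hv'
    have hTle : (t.map fun q => ι R q.2).prod ∈ UEAle S (t.map Prod.fst).sum :=
      S.prod_mem_UEAle t (fun q hq => hl q (List.mem_cons_of_mem p hq)) le_rfl
    have expand : ι R p.2 * (t.map fun q => ι R q.2).prod
        = canMap S (ι R (⟨z, mem_gradedPart_of_mem_P S hz⟩ : ↥(gradedPart S)) * v)
          + (canMap S (ι R (⟨z, mem_gradedPart_of_mem_P S hz⟩ : ↥(gradedPart S))) * t0
            + ι R w * (t.map fun q => ι R q.2).prod) := by
      rw [map_mul, canMap_iota]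
      show ι R p.2 * _ = ι R z * canMap S v + (ι R z * t0 + ι R w * _)
      rw [← add_assoc, ← mul_add]
      rw [show canMap S v + t0 = (t.map fun q => ι R q.2).prod from hTt]
      rw [← hzw, map_add, add_mul]
    rw [expand]
    refine add_mem (Submodule.mem_sup_left ?_) (Submodule.mem_sup_right (add_mem ?_ ?_))
    · exact ⟨_, S.mul_mem_UEAgrade (S.iota_mem_UEAgrade _ (by simpa using hz)) hv, rfl⟩
    · have h1 : canMap S (ι R (⟨z, mem_gradedPart_of_mem_P S hz⟩ : ↥(gradedPart S)))
          ∈ UEAle S p.1 := by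
        rw [canMap_iota]
        have := S.prod_mem_UEAle (n := p.1) [(p.1, z)] (by simpa using S.P_le_F p.1 hz) (by simp)
        simpa using this
      have := S.mul_mem_UEAle h1 ht0
      exact S.UEAle_mono
        (by omega : p.1 + ((List.map Prod.fst t).sum - 1) ≤ p.1 + (List.map Prod.fst t).sum - 1)
        this
    · have h2 : ι R w ∈ UEAle S (p.1 - 1) := by
        have := S.prod_mem_UEAle (n := p.1 - 1) [(p.1 - 1, w)] (by simpa using hw) (by simp)
        simpa using this
      have := S.mul_mem_UEAle h2 hTle
      exact S.UEAle_mono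
        (by omega : p.1 - 1 + (List.map Prod.fst t).sum ≤ p.1 + (List.map Prod.fst t).sum - 1)
        this

theorem canMap_prod (l : List (ℤ × ↥(gradedPart S))) :
    canMap S ((l.map fun p => ι R p.2).prod) = (l.map fun p => ι R (p.2 : L)).prod := by
  induction l with
  | nil => simp
  | cons p t ih => simp only [List.map_cons, List.prod_cons, map_mul, ih, canMap_iota]

theorem map_UEAgrade_le_UEAle (n : ℤ) :
    (UEAgrade S n).map (canMap S).toLinearMap ≤ UEAle S n := by
  rintro _ ⟨u, hu, rfl⟩
  induction hu using Submodule.span_induction with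
  | mem x hx =>
    obtain ⟨l, hl, hsum, rfl⟩ := hx
    show canMap S _ ∈ _
    rw [S.canMap_prod l]
    refine Submodule.subset_span ⟨l.map fun p => (p.1, (p.2 : L)), fun q hq => ?_, ?_, ?_⟩
    · obtain ⟨p, hp, rfl⟩ := List.mem_map.mp hq
      exact S.P_le_F p.1 (hl p hp)
    · rw [show ((l.map fun p => (p.1, (p.2 : L))).map Prod.fst) = l.map Prod.fst by
        simp [List.map_map, Function.comp_def]]
      omega
    · rw [List.map_map]
      rfl
  | zero => show canMap S 0 ∈ _; rw [map_zero]; exact zero_mem _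
  | add x y _ _ hx hy => show canMap S (x + y) ∈ _; rw [map_add]; exact add_mem hx hy
  | smul r x _ hx => show canMap S (r • x) ∈ _; rw [map_smul]; exact Submodule.smul_mem _ r hx

end LieSplitFiltration

open LieSplitFiltration OrderDual

/-- for a split-filtered Lie algebra `L` over a commutative ring `R`, the
universal enveloping algebra `U(L)`, with the filtration `U(L)_{≤n}`, is a split-filtered
algebra with respect to the graded algebra `U(L')`: the canonical map `U(L') → U(L)` is
injective on each homogeneous component `U(L')ₙ`, and `U(L)_{≤n}` is the internal direct
sum of the image of `U(L')ₙ` and `U(L)_{≤n-1}`. -/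
theorem universal_enveloping_split_filtered (S : LieSplitFiltration R L) :
    ∀ n : ℤ,
      (∀ x ∈ UEAgrade S n, canMap S x = 0 → x = 0) ∧
      UEAle S n = (UEAgrade S n).map (canMap S).toLinearMap ⊔ UEAle S (n - 1) ∧
      (UEAgrade S n).map (canMap S).toLinearMap ⊓ UEAle S (n - 1) = ⊥ := by
  intro n
  refine ⟨?_, ?_, ?_⟩
  · intro x hx hcan
    have h := S.Phi_canMap hx
    rw [hcan, map_zero] at h
    have := congrArg (fun f => HahnSeries.coeff f (toDual n)) h
    simpa using this.symm
  · refine le_antisymm ?_ (sup_le (S.map_UEAgrade_le_UEAle n) (S.UEAle_mono (by omega)))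
    rw [UEAle, Submodule.span_le]
    rintro _ ⟨l, hl, hsum, rfl⟩
    rcases eq_or_lt_of_le hsum with heq | hlt
    · have := S.prod_mem_sup l hl
      rw [heq] at this
      exact this
    · exact Submodule.mem_sup_right (S.prod_mem_UEAle l hl (by omega))
  · rw [eq_bot_iff]
    rintro u ⟨humem, hule⟩
    obtain ⟨v, hv, rfl⟩ := humem
    have h1 : (S.Phi (canMap S v)).coeff (toDual n) = v := by
      rw [S.Phi_canMap hv, HahnSeries.coeff_single_same]
    have h2 : (S.Phi (canMap S v)).coeff (toDual n) = 0 :=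
      S.Phi_UEAle_bound hule (by omega)
    have : v = 0 := by rw [← h1, h2]
    simp [this]
end

section
/- Let U be a split-filtered associative unital ring with exhaustive filtration, with graded splitting subring U'. Then the canonical seminorm cN^nU := U·U_{≤−n} is split-filtered and tight: for all n, p one has cN^nU ∩ U_{≤p} = (cN^nU ∩ U'_p) + (cN^nU ∩ U_{≤p−1}), and for all m, p there exists d with U_{≤−d} ⊆ cN^mU ∩ U_{≤p}. -/
/-- The canonical neighborhoods `cN^n U = U · U_{≤ -n}`: the additive subgroup
generated by all products `u * v` with `v ∈ U_{≤ -n}`. -/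
def canonicalNbhd {R : Type} [Ring R] (S : SplitFilteredRing R) (n : ℤ) : AddSubgroup R :=
  AddSubgroup.closure {x | ∃ u : R, ∃ v ∈ S.F (-n), x = u * v}

namespace SFRAux

variable {R : Type} [Ring R] (S : SplitFilteredRing R)

lemma F_mono {a b : ℤ} (h : a ≤ b) : S.F a ≤ S.F b :=
  Int.le_induction (motive := fun b _ => S.F a ≤ S.F b) (le_refl _)
    (fun n _ ih => ih.trans (S.mono n)) b h

lemma F_le_nbhd (n : ℤ) : S.F (-n) ≤ canonicalNbhd S n :=
  fun v hv => AddSubgroup.subset_closure ⟨1, v, hv, (one_mul v).symm⟩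

/-- decomposition of an element of `F a` into `P`-components down to cutoff `c`. -/
lemma decomp (c : ℤ) : ∀ a : ℤ, ∀ u ∈ S.F a,
    ∃ (s : Finset ℤ) (w : ℤ → R) (r : R),
      (∀ j ∈ s, w j ∈ S.P j ∧ c ≤ j ∧ j ≤ a) ∧ r ∈ S.F (c - 1) ∧
      u = (∑ j ∈ s, w j) + r := by
  have base : ∀ a : ℤ, a ≤ c - 1 → ∀ u ∈ S.F a, ∃ (s : Finset ℤ) (w : ℤ → R) (r : R),
      (∀ j ∈ s, w j ∈ S.P j ∧ c ≤ j ∧ j ≤ a) ∧ r ∈ S.F (c - 1) ∧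
      u = (∑ j ∈ s, w j) + r := by
    intro a ha u hu
    exact ⟨∅, 0, u, by simp, F_mono S ha hu, by simp⟩
  intro a
  rcases le_or_gt a (c - 1) with ha | ha
  · exact base a ha
  have hca : c ≤ a := by omega
  clear ha
  refine Int.le_induction (motive := fun a _ => ∀ u ∈ S.F a,
      ∃ (s : Finset ℤ) (w : ℤ → R) (r : R),
        (∀ j ∈ s, w j ∈ S.P j ∧ c ≤ j ∧ j ≤ a) ∧ r ∈ S.F (c - 1) ∧
        u = (∑ j ∈ s, w j) + r) ?_ ?_ a hca
  · intro u hu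
    rw [S.sup_eq c] at hu
    obtain ⟨y, hy, r, hr, rfl⟩ := AddSubgroup.mem_sup.mp hu
    exact ⟨{c}, fun _ => y, r, by
      intro j hj; simp only [Finset.mem_singleton] at hj; subst hj
      exact ⟨hy, le_refl _, le_refl _⟩, hr, by simp⟩
  · intro a ha ih u hu
    rw [S.sup_eq (a + 1)] at hu
    have : a + 1 - 1 = a := by ring
    rw [this] at hu
    obtain ⟨y, hy, u', hu', rfl⟩ := AddSubgroup.mem_sup.mp hu
    obtain ⟨s, w, r, hw, hr, hsum⟩ := ih u' hu'
    refine ⟨insert (a + 1) s, fun j => if j = a + 1 then y else w j, r, ?_, hr, ?_⟩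
    · intro j hj
      rcases Finset.mem_insert.mp hj with rfl | hj
      · simp only [if_pos rfl]
        exact ⟨hy, by omega, le_refl _⟩
      · have hj' := hw j hj
        beta_reduce
        rw [if_neg (show ¬ j = a + 1 by omega)]
        exact ⟨hj'.1, hj'.2.1, by omega⟩
    · have hnot : (a + 1) ∉ s := fun h => by have := (hw _ h).2.2; omega
      rw [Finset.sum_insert hnot]
      simp only [if_pos rfl]
      have : ∑ j ∈ s, (if j = a + 1 then y else w j) = ∑ j ∈ s, w j :=
        Finset.sum_congr rfl fun j hj => if_neg (by have := (hw j hj).2.2; omega)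
      rw [this, hsum, add_assoc]
      simp

/-- Every element of the canonical neighborhood is a finite sum of elements in
`M ⊓ P d` plus an element of `F (-n)`. -/
lemma phi (n : ℤ) (hexh : ∀ x : R, ∃ a : ℤ, x ∈ S.F a) :
    ∀ x ∈ canonicalNbhd S n, ∃ (s : Finset ℤ) (w : ℤ → R) (g : R),
      (∀ d ∈ s, w d ∈ canonicalNbhd S n ∧ w d ∈ S.P d) ∧ g ∈ S.F (-n) ∧
      x = (∑ d ∈ s, w d) + g := by
  set M := canonicalNbhd S n with hM
  set Phi : R → Prop := fun x => ∃ (s : Finset ℤ) (w : ℤ → R) (g : R),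
      (∀ d ∈ s, w d ∈ M ∧ w d ∈ S.P d) ∧ g ∈ S.F (-n) ∧
      x = (∑ d ∈ s, w d) + g with hPhi
  have phi_add : ∀ x y, Phi x → Phi y → Phi (x + y) := by
    rintro x y ⟨s1, w1, g1, hw1, hg1, rfl⟩ ⟨s2, w2, g2, hw2, hg2, rfl⟩
    refine ⟨s1 ∪ s2,
      fun d => (if d ∈ s1 then w1 d else 0) + (if d ∈ s2 then w2 d else 0),
      g1 + g2, ?_, add_mem hg1 hg2, ?_⟩
    · intro d _
      constructor
      · apply add_mem <;> split <;> first
          | exact (hw1 _ ‹_›).1 | exact (hw2 _ ‹_›).1 | exact zero_mem _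
      · apply add_mem <;> split <;> first
          | exact (hw1 _ ‹_›).2 | exact (hw2 _ ‹_›).2 | exact zero_mem _
    · rw [Finset.sum_add_distrib]
      rw [Finset.sum_ite_mem, Finset.sum_ite_mem, Finset.union_inter_cancel_left,
        Finset.union_inter_cancel_right]
      abel
  have phi_single : ∀ x, (∃ d, x ∈ M ∧ x ∈ S.P d) → Phi x := by
    rintro x ⟨d, hxM, hxP⟩
    exact ⟨{d}, fun _ => x, 0, by
      intro j hj; simp only [Finset.mem_singleton] at hj; subst hj; exact ⟨hxM, hxP⟩,
      zero_mem _, by simp⟩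
  have phi_F : ∀ x ∈ S.F (-n), Phi x := fun x hx => ⟨∅, 0, x, by simp, hx, by simp⟩
  intro x hx
  rw [hM, canonicalNbhd] at hx
  refine AddSubgroup.closure_induction ?_ (phi_F 0 (zero_mem _)) (fun x y _ _ => phi_add x y) ?_ hx
  · rintro z ⟨u, v, hv, rfl⟩
    obtain ⟨a, hu⟩ := hexh u
    obtain ⟨s, w, r, hw, hr, rfl⟩ := decomp S 1 a u hu
    have h1 : (1 : ℤ) - 1 = 0 := by ring
    rw [h1] at hr
    rw [add_mul, Finset.sum_mul]
    apply phi_add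
    · -- sum of (w j) * v
      apply Finset.sum_induction _ Phi phi_add (phi_F 0 (zero_mem _))
      intro j hj
      obtain ⟨hwP, hj1, _⟩ := hw j hj
      -- decompose v down to cutoff -n - j + 1
      obtain ⟨t, w', r', hw', hr', rfl⟩ := decomp S (-n - j + 1) (-n) v hv
      have hc : -n - j + 1 - 1 = -n - j := by ring
      rw [hc] at hr'
      rw [mul_add, Finset.mul_sum]
      apply phi_add
      · apply Finset.sum_induction _ Phi phi_add (phi_F 0 (zero_mem _))
        intro k hk
        obtain ⟨hkP, hk1, hk2⟩ := hw' k hk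
        refine phi_single _ ⟨j + k, ?_, S.P_mul_mem j k _ _ hwP hkP⟩
        exact AddSubgroup.subset_closure
          ⟨w j, w' k, F_mono S (by omega) (S.P_le_F k hkP), rfl⟩
      · apply phi_F
        have := S.mul_mem j (-n - j) _ _ (F_mono S (by omega) (S.P_le_F j hwP)) hr'
        have he : j + (-n - j) = -n := by ring
        rwa [he] at this
    · apply phi_F
      have := S.mul_mem 0 (-n) _ _ hr hv
      rwa [zero_add] at this
  · rintro z _ ⟨s, w, g, hw, hg, rfl⟩
    refine ⟨s, fun d => -(w d), -g, fun d hd => ⟨neg_mem (hw d hd).1, neg_mem (hw d hd).2⟩,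
      neg_mem hg, ?_⟩
    rw [neg_add, ← Finset.sum_neg_distrib]

lemma killHigh (n p : ℤ) (hp : -n ≤ p - 1) :
    ∀ s : Finset ℤ, ∀ w : ℤ → R, (∀ d ∈ s, w d ∈ canonicalNbhd S n ∧ w d ∈ S.P d) →
    ∀ g, g ∈ S.F (-n) →
    (∑ d ∈ s, w d) + g ∈ S.F p →
    (∑ d ∈ s, w d) + g ∈ (canonicalNbhd S n ⊓ S.P p) ⊔ (canonicalNbhd S n ⊓ S.F (p - 1)) := by
  intro s
  induction s using Finset.strongInduction with
  | _ s ih =>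
    intro w hw g hg hsum
    by_cases hbig : ∃ D ∈ s, p < D
    · obtain ⟨D0, hD0, hD0p⟩ := hbig
      have hne : s.Nonempty := ⟨D0, hD0⟩
      set D := s.max' hne with hD
      have hDs : D ∈ s := s.max'_mem hne
      have hpD : p < D := lt_of_lt_of_le hD0p (s.le_max' D0 hD0)
      have hsplit : ∑ d ∈ s, w d = w D + ∑ d ∈ s.erase D, w d :=
        (Finset.add_sum_erase s w hDs).symm
      have hrest : (∑ d ∈ s.erase D, w d) + g ∈ S.F (D - 1) := by
        apply add_mem
        · apply sum_mem
          intro d hd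
          have hds := Finset.mem_erase.mp hd
          have hdle : d ≤ D - 1 := by
            have := s.le_max' d hds.2
            omega
          exact F_mono S hdle (S.P_le_F d (hw d hds.2).2)
        · exact F_mono S (by omega) hg
      have hwD0 : w D = 0 := by
        have hin : w D ∈ S.P D ⊓ S.F (D - 1) := by
          refine AddSubgroup.mem_inf.mpr ⟨(hw D hDs).2, ?_⟩
          · have htot : (∑ d ∈ s, w d) + g ∈ S.F (D - 1) :=
              F_mono S (by omega) hsum
            have : w D = ((∑ d ∈ s, w d) + g) - ((∑ d ∈ s.erase D, w d) + g) := by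
              rw [hsplit]; abel
            rw [this]
            exact sub_mem htot hrest
        rw [S.inf_eq D] at hin
        exact hin
      have hsum2 : ∑ d ∈ s, w d = ∑ d ∈ s.erase D, w d := by
        rw [hsplit, hwD0, zero_add]
      rw [hsum2] at hsum ⊢
      exact ih (s.erase D) (Finset.erase_ssubset hDs) w
        (fun d hd => hw d (Finset.mem_erase.mp hd).2) g hg hsum
    · push_neg at hbig
      have hrest : (∑ d ∈ s.erase p, w d) + g ∈
          (canonicalNbhd S n ⊓ S.F (p - 1)) := by
        constructor
        · apply add_mem
          · exact sum_mem fun d hd => (hw d (Finset.mem_erase.mp hd).2).1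
          · exact F_le_nbhd S n hg
        · apply add_mem
          · apply sum_mem
            intro d hd
            have hds := Finset.mem_erase.mp hd
            have : d ≤ p - 1 := by
              have := hbig d hds.2
              have := hds.1
              omega
            exact F_mono S this (S.P_le_F d (hw d hds.2).2)
          · exact F_mono S (by omega) hg
      by_cases hps : p ∈ s
      · have hsplit : (∑ d ∈ s, w d) + g = w p + ((∑ d ∈ s.erase p, w d) + g) := by
          rw [← Finset.add_sum_erase s w hps, add_assoc]
        rw [hsplit]
        exact AddSubgroup.mem_sup.mpr
          ⟨w p, ⟨(hw p hps).1, (hw p hps).2⟩, _, hrest, rfl⟩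
      · have : s.erase p = s := Finset.erase_eq_of_notMem hps
        rw [← this]
        exact AddSubgroup.mem_sup_right hrest

end SFRAux

/-- on a split-filtered associative unital ring with exhaustive
filtration, the canonical seminorm `cN^n U = U·U_{≤-n}` is split-filtered and tight. -/
theorem canonical_seminorm_split_filtered_and_tight {R : Type} [Ring R]
    (S : SplitFilteredRing R) (hexh : ∀ x : R, ∃ n : ℤ, x ∈ S.F n) :
    (∀ n p : ℤ, canonicalNbhd S n ⊓ S.F p =
      (canonicalNbhd S n ⊓ S.P p) ⊔ (canonicalNbhd S n ⊓ S.F (p - 1))) ∧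
    (∀ m p : ℤ, ∃ d : ℤ, S.F (-d) ≤ canonicalNbhd S m ⊓ S.F p) := by
  constructor
  · intro n p
    apply le_antisymm
    · rcases le_or_gt p (-n) with hp | hp
      · rintro x ⟨hxM, hxF⟩
        have hFle : S.F p ≤ canonicalNbhd S n :=
          (SFRAux.F_mono S hp).trans (SFRAux.F_le_nbhd S n)
        rw [S.sup_eq p] at hxF
        obtain ⟨y, hy, z, hz, rfl⟩ := AddSubgroup.mem_sup.mp hxF
        apply AddSubgroup.mem_sup.mpr
        refine ⟨y, ⟨hFle (S.P_le_F p hy), hy⟩, z, ⟨?_, hz⟩, rfl⟩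
        exact ((SFRAux.F_mono S (by omega)).trans (SFRAux.F_le_nbhd S n)) hz
      · rintro x ⟨hxM, hxF⟩
        obtain ⟨s, w, g, hw, hg, rfl⟩ := SFRAux.phi S n hexh x hxM
        exact SFRAux.killHigh S n p (by omega) s w hw g hg hxF
    · apply sup_le
      · exact inf_le_inf_left _ (S.P_le_F p)
      · exact inf_le_inf_left _ (SFRAux.F_mono S (by omega))
  · intro m p
    refine ⟨max m (-p), fun x hx => ⟨?_, ?_⟩⟩
    · exact SFRAux.F_le_nbhd S m (SFRAux.F_mono S (by omega) hx)
    · exact SFRAux.F_mono S (by omega) hx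
end

section
/- Let U be a split-filtered associative ring equipped with a split-filtered seminorm N, and write cN^nU := U·U_{≤−n} and, for any subgroup M ⊆ U, M_{≤p} := M ∩ U_{≤p}. Then the following are equivalent: (1) N^nU_{≤p} = cN^nU_{≤p} + N^{n+1}U_{≤p} for all n, p; (2) N^nU_{≤p} = cN^nU_{≤p} + N^{n+d}U_{≤p} for all n, p and all d > 0; (3) for all n, p: cN^nU_{≤p} ⊆ N^nU_{≤p}, and cN^nU_{≤p} is dense in N^nU_{≤p}, i.e. for every x ∈ N^nU_{≤p} and every m ∈ ℤ there exists y ∈ cN^nU_{≤p} with x − y ∈ N^mU. -/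
/-- The filtration of a split-filtered ring is monotone. -/
lemma SplitFilteredRing.F_mono_s18 {R : Type} [Ring R] (S : SplitFilteredRing R)
    {a b : ℤ} (h : a ≤ b) : S.F a ≤ S.F b :=
  Int.le_induction (motive := fun b _ => S.F a ≤ S.F b) le_rfl
    (fun n _ ih => ih.trans (S.mono n)) b h

/-- The canonical neighborhoods are antitone. -/
lemma canonicalNbhd_anti {R : Type} [Ring R] (S : SplitFilteredRing R)
    {m n : ℤ} (h : m ≤ n) : canonicalNbhd S n ≤ canonicalNbhd S m := by
  apply AddSubgroup.closure_mono
  rintro x ⟨u, v, hv, rfl⟩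
  exact ⟨u, v, S.F_mono_s18 (by omega) hv, rfl⟩

/-- for a split-filtered ring with a split-filtered seminorm `N`, the
following are equivalent:
(1) `N^n U_{≤p} = cN^n U_{≤p} + N^{n+1} U_{≤p}` for all `n, p`;
(2) `N^n U_{≤p} = cN^n U_{≤p} + N^{n+d} U_{≤p}` for all `n, p` and all `d > 0`;
(3) `cN^n U_{≤p}` is contained in and dense in `N^n U_{≤p}`. -/
theorem almost_canonical_conditions_tfae {R : Type} [Ring R] (S : SplitFilteredRing R)
    (N : ℤ → AddSubgroup R)
    (hN_anti : ∀ n : ℤ, N n ≤ N (n - 1))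
    (hN_exh : ∀ x : R, ∃ n : ℤ, x ∈ N n)
    (hsplit : ∀ n p : ℤ, N n ⊓ S.F p = (N n ⊓ S.P p) ⊔ (N n ⊓ S.F (p - 1))) :
    ((∀ n p : ℤ,
        N n ⊓ S.F p = (canonicalNbhd S n ⊓ S.F p) ⊔ (N (n + 1) ⊓ S.F p)) ↔
      (∀ n p d : ℤ, 0 < d →
        N n ⊓ S.F p = (canonicalNbhd S n ⊓ S.F p) ⊔ (N (n + d) ⊓ S.F p))) ∧
    ((∀ n p d : ℤ, 0 < d →
        N n ⊓ S.F p = (canonicalNbhd S n ⊓ S.F p) ⊔ (N (n + d) ⊓ S.F p)) ↔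
      (∀ n p : ℤ,
        canonicalNbhd S n ⊓ S.F p ≤ N n ⊓ S.F p ∧
        ∀ x ∈ N n ⊓ S.F p, ∀ m : ℤ, ∃ y ∈ canonicalNbhd S n ⊓ S.F p, x - y ∈ N m)) := by
  -- N is antitone
  have hNanti : ∀ m n : ℤ, m ≤ n → N n ≤ N m := by
    intro m
    refine Int.le_induction le_rfl (fun k _ ih => le_trans ?_ ih)
    have := hN_anti (k + 1)
    simpa using this
  constructor
  · constructor
    · -- (1) → (2)
      intro h1 n p d hd
      have key : ∀ e : ℤ, 1 ≤ e → ∀ n : ℤ,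
          N n ⊓ S.F p = (canonicalNbhd S n ⊓ S.F p) ⊔ (N (n + e) ⊓ S.F p) := by
        refine Int.le_induction (fun n => h1 n p) (fun k hk ih n => ?_)
        have h2 := h1 (n + k) p
        rw [ih n, h2]
        have hA : canonicalNbhd S (n + k) ⊓ S.F p ≤ canonicalNbhd S n ⊓ S.F p :=
          inf_le_inf_right _ (canonicalNbhd_anti S (by omega))
        rw [← sup_assoc, sup_eq_left.mpr hA, show n + (k + 1) = n + k + 1 by ring]
      exact key d hd n
    · -- (2) → (1)
      intro h2 n p
      exact h2 n p 1 one_pos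
  · constructor
    · -- (2) → (3)
      intro h2 n p
      have hle : canonicalNbhd S n ⊓ S.F p ≤ N n ⊓ S.F p := by
        rw [h2 n p 1 one_pos]; exact le_sup_left
      refine ⟨hle, ?_⟩
      intro x hx m
      by_cases hm : m ≤ n
      · exact ⟨0, zero_mem _, by simpa using hNanti m n hm hx.1⟩
      · have hd : 0 < m - n := by omega
        have := h2 n p (m - n) hd
        rw [this] at hx
        rcases AddSubgroup.mem_sup.mp hx with ⟨y, hy, z, hz, hxyz⟩
        refine ⟨y, hy, ?_⟩
        have hxz : x - y = z := by rw [← hxyz]; abel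
        rw [hxz]
        have : n + (m - n) = m := by omega
        rw [this] at hz
        exact hz.1
    · -- (3) → (2)
      intro h3 n p d hd
      apply le_antisymm
      · intro x hx
        rcases (h3 n p).2 x hx (n + d) with ⟨y, hy, hxy⟩
        have hmem : x - y ∈ N (n + d) ⊓ S.F p := AddSubgroup.mem_inf.mpr ⟨hxy, sub_mem (AddSubgroup.mem_inf.mp hx).2 (AddSubgroup.mem_inf.mp hy).2⟩
        exact AddSubgroup.mem_sup.mpr ⟨y, hy, x - y, hmem, by abel⟩
      · refine sup_le (h3 n p).1 (inf_le_inf_right _ (hNanti n (n + d) (by omega)))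
end
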